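/- arXiv:2008.05220 — 3 statements merged into one kernel-verified Lean document; each statement's English description precedes it below -/
import Mathlib

section
/- Let P be a scale group acting on T_{q+1} and let c be a P-labelling with distinguished bi-infinite path (v_n)_{n∈ℤ}. Then there exists a bijection φ of the vertex set with φ(v⁺) = (φ(v))⁺ for all vertices v (so φ ∈ Isom(T_{q+1})_ω), with φ(v_n) = ṽ_n for all n ∈ ℤ, and carrying c to the standard labelling: for every vertex v and every child w of v, φ(w) = φ(v)j where j = c_v(v,w). Moreover P′ := φPφ⁻¹ is a scale group and the standard labelling is a P′-labelling. -/
namespace Scale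

/-- A vertex of the `(q+1)`-regular tree `T_{q+1}`: a level `n ∈ ℤ` together with a
labelling `ℤ → Fin q` which vanishes above the level and for all sufficiently small indices. -/
@[ext] structure Vertex (q : ℕ) where
  level : ℤ
  lab : ℤ → Fin q
  zero_gt : ∀ i : ℤ, level < i → (lab i : ℕ) = 0
  bdd : ∃ N : ℤ, ∀ i : ℤ, i < N → (lab i : ℕ) = 0

namespace Vertex

variable {q : ℕ} [NeZero q]

/-- The parent `v⁺` of a vertex. -/
def parent (v : Vertex q) : Vertex q where
  level := v.level - 1
  lab := fun i => if v.level - 1 < i then 0 else v.lab i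
  zero_gt := by intro i hi; simp [hi]
  bdd := by
    obtain ⟨N, hN⟩ := v.bdd
    refine ⟨N, fun i hi => ?_⟩
    by_cases h : v.level - 1 < i
    · simp [h]
    · simp [h, hN i hi]

/-- The child `vj` of a vertex `v`. -/
def child (v : Vertex q) (j : Fin q) : Vertex q where
  level := v.level + 1
  lab := fun i => if i = v.level + 1 then j else v.lab i
  zero_gt := by
    intro i hi
    have h1 : i ≠ v.level + 1 := by omega
    simp [h1, v.zero_gt i (by omega)]
  bdd := by
    obtain ⟨N, hN⟩ := v.bdd
    refine ⟨min N (v.level + 1), fun i hi => ?_⟩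
    have h1 : i < N := lt_of_lt_of_le hi (min_le_left _ _)
    have h2 : i < v.level + 1 := lt_of_lt_of_le hi (min_le_right _ _)
    have h3 : i ≠ v.level + 1 := by omega
    simp [h3, hN i h1]

/-- The restriction `w|_m` of a vertex to level `m`. -/
def trunc (v : Vertex q) (m : ℤ) : Vertex q where
  level := m
  lab := fun i => if m < i then 0 else v.lab i
  zero_gt := by intro i hi; simp [hi]
  bdd := by
    obtain ⟨N, hN⟩ := v.bdd
    refine ⟨N, fun i hi => ?_⟩
    by_cases h : m < i
    · simp [h]
    · simp [h, hN i hi]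

/-- `w` is a descendant of `u` (in the rooted subtree `T_u`). -/
def Descendant (u w : Vertex q) : Prop := u.level ≤ w.level ∧ trunc w u.level = u

end Vertex

/-- The all-zero vertex `ṽ_n` at level `n`. -/
def zeroVtx (q : ℕ) [NeZero q] (n : ℤ) : Vertex q where
  level := n
  lab := fun _ => 0
  zero_gt := by intro i _; simp
  bdd := ⟨0, by intro i _; simp⟩

/-- The map shifting all labels by `k` (a translation towards the end `ω` when `k > 0`). -/
def shiftMap {q : ℕ} (k : ℤ) (v : Vertex q) : Vertex q where
  level := v.level + k
  lab := fun i => v.lab (i - k)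
  zero_gt := fun i hi => v.zero_gt (i - k) (by omega)
  bdd := by
    obtain ⟨N, hN⟩ := v.bdd
    exact ⟨N + k, fun i hi => hN (i - k) (by omega)⟩

/-- The translation `x̃₀ᵏ` of `T_{q+1}` as a permutation of the vertices. -/
def shiftPerm (q : ℕ) (k : ℤ) : Equiv.Perm (Vertex q) where
  toFun := shiftMap k
  invFun := shiftMap (-k)
  left_inv := by
    intro v
    refine Vertex.ext ?_ ?_
    · show v.level + k + -k = v.level
      omega
    · funext i
      show v.lab (i - -k - k) = v.lab i
      congr 1
      omega
  right_inv := by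
    intro v
    refine Vertex.ext ?_ ?_
    · show v.level + -k + k = v.level
      omega
    · funext i
      show v.lab (i - k - -k) = v.lab i
      congr 1
      omega

/-- The group `Isom(T_{q+1})_ω` of tree automorphisms fixing the distinguished end `ω`,
realised as the subgroup of permutations of the vertex set commuting with `parent`. -/
def IsomOmega (q : ℕ) [NeZero q] : Subgroup (Equiv.Perm (Vertex q)) where
  carrier := {x | ∀ v : Vertex q, x (Vertex.parent v) = Vertex.parent (x v)}
  one_mem' := fun _ => rfl
  mul_mem' := by
    intro a b ha hb v
    show (a * b) (Vertex.parent v) = Vertex.parent ((a * b) v)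
    rw [Equiv.Perm.mul_apply, Equiv.Perm.mul_apply, hb, ha]
  inv_mem' := by
    intro a ha v
    show a⁻¹ (Vertex.parent v) = Vertex.parent (a⁻¹ v)
    have h := ha (a⁻¹ v)
    rw [show ∀ x, a (a⁻¹ x) = x from a.apply_symm_apply] at h
    rw [← h, show ∀ x, a⁻¹ (a x) = x from a.symm_apply_apply]

/-- The level shift `n(x)` of an automorphism (evaluated at the zero vertex; for members
of `IsomOmega q` the shift is the same at every vertex). -/
def lshift {q : ℕ} [NeZero q] (x : Equiv.Perm (Vertex q)) : ℤ := (x (zeroVtx q 0)).level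

/-- An automorphism is elliptic if it fixes a vertex. -/
def Elliptic {q : ℕ} (x : Equiv.Perm (Vertex q)) : Prop := ∃ v : Vertex q, x v = v

/-- Topology of pointwise convergence on `X → X` for `X` discrete. -/
def funTop (X : Type*) : TopologicalSpace (X → X) :=
  @Pi.topologicalSpace X (fun _ => X) (fun _ => ⊥)

/-- The permutation topology on `Equiv.Perm X`: pointwise stabilisers of finite sets of
points form a neighbourhood basis of the identity. -/
def permTop (X : Type*) : TopologicalSpace (Equiv.Perm X) :=
  @TopologicalSpace.induced (Equiv.Perm X) ((X → X) × (X → X))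
    (fun g => ((g : X → X), ((g⁻¹ : Equiv.Perm X) : X → X)))
    (@instTopologicalSpaceProd _ _ (funTop X) (funTop X))

instance (q : ℕ) : TopologicalSpace (Equiv.Perm (Vertex q)) := permTop _

instance (q : ℕ) : TopologicalSpace (Equiv.Perm (List (Fin q))) := permTop _

/-- A scale group: a closed subgroup of `Isom(T_{q+1})_ω` acting transitively on vertices. -/
def IsScaleGroup {q : ℕ} [NeZero q] (P : Subgroup (Equiv.Perm (Vertex q))) : Prop :=
  P ≤ IsomOmega q ∧ IsClosed (P : Set (Equiv.Perm (Vertex q))) ∧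
    ∀ v w : Vertex q, ∃ x ∈ P, x v = w

/-- The stabiliser of the vertex `v` in `P`, as a subgroup of the ambient permutation group. -/
def stabIn {q : ℕ} (P : Subgroup (Equiv.Perm (Vertex q))) (v : Vertex q) :
    Subgroup (Equiv.Perm (Vertex q)) where
  carrier := {g | g ∈ P ∧ g v = v}
  one_mem' := ⟨P.one_mem, rfl⟩
  mul_mem' := by
    intro a b ha hb
    exact ⟨P.mul_mem ha.1 hb.1, by rw [Equiv.Perm.mul_apply, hb.2, ha.2]⟩
  inv_mem' := by
    intro a ha
    refine ⟨P.inv_mem ha.1, ?_⟩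
    rw [Equiv.Perm.inv_eq_iff_eq]
    exact ha.2.symm

/-- The conjugate subgroup `xVx⁻¹`. -/
def conjSub {G : Type*} [Group G] (x : G) (V : Subgroup G) : Subgroup G :=
  V.map (MulAut.conj x).toMonoidHom

/-- The vertex `ξ|_m` on the ray towards the end represented by `ξ`. -/
def ray (q : ℕ) [NeZero q] (ξ : ℤ → Fin q) (N : ℤ) (hξ : ∀ i : ℤ, i < N → (ξ i : ℕ) = 0)
    (m : ℤ) : Vertex q where
  level := m
  lab := fun i => if m < i then 0 else ξ i
  zero_gt := by intro i hi; simp [hi]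
  bdd := by
    refine ⟨N, fun i hi => ?_⟩
    by_cases h : m < i
    · simp [h]
    · simp [h, hξ i hi]

/-- The contraction group of `x` in `P`. -/
def conSet {q : ℕ} (P : Subgroup (Equiv.Perm (Vertex q))) (x : Equiv.Perm (Vertex q)) :
    Set (Equiv.Perm (Vertex q)) :=
  {g | g ∈ P ∧ ∀ v : Vertex q, ∃ N : ℕ, ∀ n : ℕ, N ≤ n → (x ^ n * g * (x ^ n)⁻¹) v = v}


/-- `c` is a `P`-labelling of `T_{q+1}` with distinguished bi-infinite path `vp`:
each `c v` is a bijection from the directed edges out of `v` (encoded as the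
neighbours of `v`) to `{0, …, q}`; the edge towards the parent is labelled `q`;
along the path `vp` the downward edges are labelled `0`; and `P` contains, for
all `u₁, u₂`, an element carrying `u₁` to `u₂` and preserving the labels on the
rooted subtree of descendants of `u₁`. -/
def IsPLabelling {q : ℕ} [NeZero q] (P : Subgroup (Equiv.Perm (Vertex q)))
    (c : Vertex q → Vertex q → Fin (q + 1)) (vp : ℤ → Vertex q) : Prop :=
  (∀ v : Vertex q, ∀ j : Fin (q + 1),
      ∃! w : Vertex q, (Vertex.parent w = v ∨ w = Vertex.parent v) ∧ c v w = j) ∧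
  (∀ v : Vertex q, (c v (Vertex.parent v) : ℕ) = q) ∧
  (∀ n : ℤ, Vertex.parent (vp (n + 1)) = vp n) ∧
  (∀ n : ℤ, (c (vp n) (vp (n + 1)) : ℕ) = 0) ∧
  (∀ u₁ u₂ : Vertex q, ∃ x, x ∈ P ∧ x u₁ = u₂ ∧
    ∀ w w' : Vertex q, Vertex.Descendant u₁ w → Vertex.Descendant u₁ w' →
      (Vertex.parent w = w' ∨ Vertex.parent w' = w) → c (x w) (x w') = c w w')

open Classical in
/-- The standard labelling of `T_{q+1}`: the edge from `v` to its child `vj` is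
labelled `j` and the edge towards the parent is labelled `q`. -/
noncomputable def stdLabel (q : ℕ) [NeZero q] : Vertex q → Vertex q → Fin (q + 1) :=
  fun v w =>
    if Vertex.parent w = v then Fin.castLE (Nat.le_succ q) (w.lab (v.level + 1))
    else Fin.last q

/-- Convert an edge label in `{0,…,q}` known to be `< q` into a letter in `{0,…,q-1}`. -/
def toFinQ {q : ℕ} [NeZero q] (j : Fin (q + 1)) : Fin q :=
  if h : (j : ℕ) < q then ⟨j, h⟩ else ⟨0, Nat.pos_of_ne_zero (NeZero.ne q)⟩

/-- The string of labels read along the downward path of length `d` ending at `w`. -/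
def labelString {q : ℕ} [NeZero q] (c : Vertex q → Vertex q → Fin (q + 1)) :
    Vertex q → ℕ → List (Fin q)
  | _, 0 => []
  | w, (d + 1) => labelString c (Vertex.parent w) d ++ [toFinQ (c (Vertex.parent w) w)]

/-- The isomorphism `φ^c_v : T_v → T_{q,q}` given by a labelling `c`: a descendant `w`
of `v` is sent to the string of labels along the path from `v` down to `w`. -/
def phiStr {q : ℕ} [NeZero q] (c : Vertex q → Vertex q → Fin (q + 1)) (v w : Vertex q) :
    List (Fin q) :=
  labelString c w ((w.level - v.level).toNat)

/-- The set `P|_v = {φ^c_{x(v)} ∘ x ∘ (φ^c_v)⁻¹ : x ∈ P}` of sections of elements of `P`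
at the vertex `v`, with respect to the labelling `c`. -/
def sectSet {q : ℕ} [NeZero q] (P : Subgroup (Equiv.Perm (Vertex q)))
    (c : Vertex q → Vertex q → Fin (q + 1)) (v : Vertex q) :
    Set (Equiv.Perm (List (Fin q))) :=
  {g | ∃ x, x ∈ P ∧ ∀ w : Vertex q, Vertex.Descendant v w →
        g (phiStr c v w) = phiStr c (x v) (x w)}

/-- The standard isomorphism `φ_v : T_v → T_{q,q}`: a descendant `w` of `v` of level `m`
is sent to the string `(w_{n+1}, …, w_m)` where `n` is the level of `v`. -/
def stdStr {q : ℕ} (v w : Vertex q) : List (Fin q) :=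
  (List.range (w.level - v.level).toNat).map fun k => w.lab (v.level + 1 + k)

/-- The set `{φ_{x(v)} ∘ x ∘ φ_v⁻¹ : x ∈ P}` with respect to the standard isomorphisms. -/
def stdSect {q : ℕ} [NeZero q] (P : Subgroup (Equiv.Perm (Vertex q))) (v : Vertex q) :
    Set (Equiv.Perm (List (Fin q))) :=
  {g | ∃ x, x ∈ P ∧ ∀ w : Vertex q, Vertex.Descendant v w →
        g (stdStr v w) = stdStr (x v) (x w)}

/-- `Isom(T_{q,q})`: the group of permutations of the set of finite strings over
`{0,…,q-1}` preserving length and the prefix relation. -/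
def RIsom (q : ℕ) : Subgroup (Equiv.Perm (List (Fin q))) where
  carrier := {g | (∀ l : List (Fin q), (g l).length = l.length) ∧
    ∀ l₁ l₂ : List (Fin q), l₁ <+: l₂ → g l₁ <+: g l₂}
  one_mem' := ⟨fun _ => rfl, fun _ _ h => h⟩
  mul_mem' := by
    intro a b ha hb
    constructor
    · intro l
      rw [Equiv.Perm.mul_apply, ha.1, hb.1]
    · intro l₁ l₂ h
      rw [Equiv.Perm.mul_apply, Equiv.Perm.mul_apply]
      exact ha.2 _ _ (hb.2 _ _ h)
  inv_mem' := by
    intro a ha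
    have hlen : ∀ l : List (Fin q), (a⁻¹ l).length = l.length := by
      intro l
      have h := ha.1 (a⁻¹ l)
      rw [show ∀ x, a (a⁻¹ x) = x from a.apply_symm_apply] at h
      exact h.symm
    refine ⟨hlen, ?_⟩
    intro l₁ l₂ h
    have htake : List.take (a⁻¹ l₁).length (a⁻¹ l₂) <+: a⁻¹ l₂ := List.take_prefix _ _
    have h2 : a (List.take (a⁻¹ l₁).length (a⁻¹ l₂)) <+: a (a⁻¹ l₂) := ha.2 _ _ htake
    rw [show ∀ x, a (a⁻¹ x) = x from a.apply_symm_apply] at h2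
    have hle : l₁.length ≤ l₂.length := h.length_le
    have hlen3 : (a (List.take (a⁻¹ l₁).length (a⁻¹ l₂))).length = l₁.length := by
      rw [ha.1, List.length_take, hlen, hlen]
      omega
    have hpre : a (List.take (a⁻¹ l₁).length (a⁻¹ l₂)) <+: l₁ :=
      List.prefix_of_prefix_length_le h2 h (le_of_eq hlen3)
    have heq : a (List.take (a⁻¹ l₁).length (a⁻¹ l₂)) = l₁ := hpre.eq_of_length hlen3
    have heq2 : List.take (a⁻¹ l₁).length (a⁻¹ l₂) = a⁻¹ l₁ := by
      apply a.injective
      rw [heq, show ∀ x, a (a⁻¹ x) = x from a.apply_symm_apply]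
    rw [← heq2]
    exact List.take_prefix _ _

/-- A subgroup of `Isom(T_{q,q})` is self-replicating if it is self-similar, transitive
on level 1, and all the section homomorphisms `g ↦ g|_w` are surjective. -/
def SelfReplicating {q : ℕ} (G : Subgroup (Equiv.Perm (List (Fin q)))) : Prop :=
  (∀ w : List (Fin q), ∀ g, g ∈ G → g w = w →
      ∃ g', g' ∈ G ∧ ∀ v : List (Fin q), g (w ++ v) = w ++ g' v) ∧
  (∀ j j' : Fin q, ∃ g ∈ G, g [j] = [j']) ∧
  (∀ w : List (Fin q), ∀ g', g' ∈ G →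
      ∃ g, g ∈ G ∧ g w = w ∧ ∀ v : List (Fin q), g (w ++ v) = w ++ g' v)

/-- The stabiliser of the string `w` in `G ≤ Isom(T_{q,q})`, as a subgroup of `G`. -/
def rstab {q : ℕ} (G : Subgroup (Equiv.Perm (List (Fin q)))) (w : List (Fin q)) :
    Subgroup G where
  carrier := {g | (g : Equiv.Perm (List (Fin q))) w = w}
  one_mem' := rfl
  mul_mem' := by
    intro a b ha hb
    show ((a * b : G) : Equiv.Perm (List (Fin q))) w = w
    rw [Subgroup.coe_mul, Equiv.Perm.mul_apply]
    rw [show (b : Equiv.Perm (List (Fin q))) w = w from hb,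
      show (a : Equiv.Perm (List (Fin q))) w = w from ha]
  inv_mem' := by
    intro a ha
    show ((a⁻¹ : G) : Equiv.Perm (List (Fin q))) w = w
    rw [Subgroup.coe_inv, Equiv.Perm.inv_eq_iff_eq]
    exact (show (a : Equiv.Perm (List (Fin q))) w = w from ha).symm


/-! ### Auxiliary development for statement 7 -/

namespace S7

open Vertex

variable {q : ℕ} [NeZero q]

lemma lab_eq_zero {v : Vertex q} {i : ℤ} (h : (v.lab i : ℕ) = 0) : v.lab i = 0 :=
  Fin.ext (by simpa using h)

lemma parent_level (v : Vertex q) : v.parent.level = v.level - 1 := rfl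

lemma trunc_level (v : Vertex q) (m : ℤ) : (v.trunc m).level = m := rfl

lemma level_of_parent_eq {v w : Vertex q} (h : w.parent = v) : w.level = v.level + 1 := by
  have h2 := congrArg Vertex.level h
  rw [parent_level] at h2
  omega

lemma trunc_self (v : Vertex q) : v.trunc v.level = v := by
  refine Vertex.ext rfl ?_
  funext i
  show (if v.level < i then 0 else v.lab i) = v.lab i
  split
  · exact (lab_eq_zero (v.zero_gt i ‹_›)).symm
  · rfl

lemma parent_trunc (v : Vertex q) (m : ℤ) : (v.trunc m).parent = v.trunc (m - 1) := by
  refine Vertex.ext rfl ?_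
  funext i
  show (if m - 1 < i then 0 else if m < i then 0 else v.lab i)
      = (if m - 1 < i then 0 else v.lab i)
  by_cases h : m - 1 < i
  · rw [if_pos h, if_pos h]
  · rw [if_neg h, if_neg h, if_neg (by omega)]

lemma trunc_trunc (v : Vertex q) {m m' : ℤ} (h : m ≤ m') :
    (v.trunc m').trunc m = v.trunc m := by
  refine Vertex.ext rfl ?_
  funext i
  show (if m < i then 0 else if m' < i then 0 else v.lab i) = (if m < i then 0 else v.lab i)
  by_cases h1 : m < i
  · rw [if_pos h1, if_pos h1]
  · rw [if_neg h1, if_neg h1, if_neg (by omega)]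

lemma trunc_parent (v : Vertex q) {m : ℤ} (h : m ≤ v.level - 1) :
    v.parent.trunc m = v.trunc m := by
  refine Vertex.ext rfl ?_
  funext i
  show (if m < i then 0 else if v.level - 1 < i then 0 else v.lab i)
      = (if m < i then 0 else v.lab i)
  by_cases h1 : m < i
  · rw [if_pos h1, if_pos h1]
  · rw [if_neg h1, if_neg h1, if_neg (by omega)]

lemma trunc_pred (v : Vertex q) : v.trunc (v.level - 1) = v.parent := by
  rw [← parent_trunc, trunc_self]

lemma child_level (v : Vertex q) (j : Fin q) : (v.child j).level = v.level + 1 := rfl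

lemma child_lab_top (v : Vertex q) (j : Fin q) : (v.child j).lab (v.level + 1) = j := by
  show (if v.level + 1 = v.level + 1 then j else v.lab (v.level + 1)) = j
  rw [if_pos rfl]

lemma parent_child (v : Vertex q) (j : Fin q) : (v.child j).parent = v := by
  refine Vertex.ext (by show v.level + 1 - 1 = v.level; omega) ?_
  funext i
  show (if v.level + 1 - 1 < i then 0 else if i = v.level + 1 then j else v.lab i) = v.lab i
  by_cases h1 : v.level + 1 - 1 < i
  · rw [if_pos h1]
    exact (lab_eq_zero (v.zero_gt i (by omega))).symm
  · rw [if_neg h1, if_neg (by omega)]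

lemma child_eq {v w : Vertex q} (h : w.parent = v) : w = v.child (w.lab (v.level + 1)) := by
  have hl : w.level = v.level + 1 := level_of_parent_eq h
  refine Vertex.ext (by rw [child_level]; omega) ?_
  funext i
  show w.lab i = if i = v.level + 1 then w.lab (v.level + 1) else v.lab i
  by_cases h1 : i = v.level + 1
  · rw [if_pos h1, h1]
  · rw [if_neg h1, ← h]
    show w.lab i = if w.level - 1 < i then 0 else w.lab i
    by_cases h2 : w.level - 1 < i
    · rw [if_pos h2]
      exact lab_eq_zero (w.zero_gt i (by omega))
    · rw [if_neg h2]

lemma zeroVtx_level (n : ℤ) : (zeroVtx q n).level = n := rfl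

lemma zeroVtx_lab (n i : ℤ) : (zeroVtx q n).lab i = 0 := rfl

lemma trunc_zeroVtx (n m : ℤ) : (zeroVtx q n).trunc m = zeroVtx q m := by
  refine Vertex.ext rfl ?_
  funext i
  show (if m < i then 0 else (0 : Fin q)) = 0
  split <;> rfl

lemma parent_zeroVtx (n : ℤ) : (zeroVtx q (n + 1)).parent = zeroVtx q n := by
  refine Vertex.ext (by show n + 1 - 1 = n; omega) ?_
  funext i
  show (if n + 1 - 1 < i then 0 else (0 : Fin q)) = 0
  split <;> rfl

lemma exists_trunc_zero (v : Vertex q) : ∃ N : ℤ, ∀ m ≤ N, v.trunc m = zeroVtx q m := by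
  obtain ⟨N, hN⟩ := v.bdd
  refine ⟨N - 1, fun m hm => ?_⟩
  refine Vertex.ext rfl ?_
  funext i
  show (if m < i then 0 else v.lab i) = 0
  by_cases h1 : m < i
  · rw [if_pos h1]
  · rw [if_neg h1]
    exact lab_eq_zero (hN i (by omega))

lemma toFinQ_val {j : Fin (q + 1)} (h : (j : ℕ) < q) : ((toFinQ j : Fin q) : ℕ) = (j : ℕ) := by
  simp [toFinQ, h]

lemma toFinQ_eq_zero {j : Fin (q + 1)} (h : (j : ℕ) = 0) : toFinQ j = 0 := by
  have hq0 : 0 < q := Nat.pos_of_ne_zero (NeZero.ne q)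
  apply Fin.ext
  rw [toFinQ_val (by omega), h]
  simp

lemma toFinQ_castLE (r : Fin q) : toFinQ (Fin.castLE (Nat.le_succ q) r) = r := by
  apply Fin.ext
  rw [toFinQ_val (by simpa using r.isLt)]
  simp

lemma parent_parent_ne (v : Vertex q) : v.parent.parent ≠ v := by
  intro h
  have h2 := congrArg Vertex.level h
  rw [parent_level, parent_level] at h2
  omega

section Labelling

variable {c : Vertex q → Vertex q → Fin (q + 1)} {vp : ℤ → Vertex q}

lemma c_lt
    (h1 : ∀ v : Vertex q, ∀ j : Fin (q + 1),
      ∃! w : Vertex q, (w.parent = v ∨ w = v.parent) ∧ c v w = j)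
    (h2 : ∀ v : Vertex q, (c v v.parent : ℕ) = q)
    {v w : Vertex q} (h : w.parent = v) : (c v w : ℕ) < q := by
  rcases lt_or_eq_of_le (Nat.lt_succ_iff.mp (c v w).isLt) with hlt | heq
  · exact hlt
  · exfalso
    have huniq : w = v.parent :=
      (h1 v (c v w)).unique ⟨Or.inl h, rfl⟩ ⟨Or.inr rfl, Fin.ext (by rw [h2 v, heq])⟩
    have h3 := congrArg Vertex.level huniq
    have h4 := level_of_parent_eq h
    rw [parent_level] at h3
    omega

lemma exists_child_label
    (h1 : ∀ v : Vertex q, ∀ j : Fin (q + 1),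
      ∃! w : Vertex q, (w.parent = v ∨ w = v.parent) ∧ c v w = j)
    (h2 : ∀ v : Vertex q, (c v v.parent : ℕ) = q)
    (v : Vertex q) (r : Fin (q + 1)) (hr : (r : ℕ) < q) :
    ∃! w : Vertex q, w.parent = v ∧ c v w = r := by
  obtain ⟨w, ⟨hw1, hw2⟩, hw3⟩ := h1 v r
  rcases hw1 with hw1 | hw1
  · exact ⟨w, ⟨hw1, hw2⟩, fun w' hw' => hw3 w' ⟨Or.inl hw'.1, hw'.2⟩⟩
  · exfalso
    rw [hw1] at hw2
    have := h2 v
    rw [hw2] at this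
    omega

end Labelling

section Phi0

variable {c : Vertex q → Vertex q → Fin (q + 1)} {vp : ℤ → Vertex q}

lemma vp_level (h3 : ∀ n : ℤ, (vp (n + 1)).parent = vp n) :
    ∀ n : ℤ, (vp n).level = (vp 0).level + n := by
  intro n
  induction n using Int.induction_on with
  | zero => simp
  | succ k ih =>
      have h := level_of_parent_eq (h3 k)
      omega
  | pred k ih =>
      have h := level_of_parent_eq (h3 (-(k : ℤ) - 1))
      rw [show (-(k : ℤ) - 1 + 1) = -(k : ℤ) from by ring] at h
      omega

lemma vp_trunc_gen (h3 : ∀ n : ℤ, (vp (n + 1)).parent = vp n) :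
    ∀ (n : ℤ) (d : ℕ), (vp n).trunc ((vp n).level - d) = vp (n - d) := by
  intro n d
  induction d with
  | zero => simpa using trunc_self (vp n)
  | succ k ih =>
      have e1 : (vp n).level - ((k : ℕ) + 1 : ℕ) = ((vp n).level - k) - 1 := by
        push_cast; ring
      rw [e1, ← parent_trunc, ih]
      have h := h3 (n - k - 1)
      rw [show (n - (k : ℤ) - 1 + 1) = n - k from by ring] at h
      rw [h, show n - ((k : ℕ) + 1 : ℕ) = n - (k : ℤ) - 1 from by push_cast; ring]

lemma vp_trunc (h3 : ∀ n : ℤ, (vp (n + 1)).parent = vp n) {n m : ℤ}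
    (hm : m ≤ (vp n).level) : (vp n).trunc m = vp (m - (vp 0).level) := by
  have hn := vp_level h3 n
  have hc1 : ((((vp n).level - m).toNat : ℤ)) = (vp n).level - m := Int.toNat_of_nonneg (by omega)
  have h := vp_trunc_gen h3 n ((vp n).level - m).toNat
  rw [show (vp n).level - ((((vp n).level - m).toNat : ℤ)) = m from by omega,
    show n - ((((vp n).level - m).toNat : ℤ)) = m - (vp 0).level from by omega] at h
  exact h

lemma vp_eq_zeroVtx (h3 : ∀ n : ℤ, (vp (n + 1)).parent = vp n) :
    ∃ M : ℤ, ∀ n ≤ M, vp n = zeroVtx q ((vp 0).level + n) := by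
  obtain ⟨N, hN⟩ := exists_trunc_zero (vp 0)
  refine ⟨min (N - (vp 0).level) 0, fun n hn => ?_⟩
  have h2 := vp_trunc h3 (n := 0) (m := (vp 0).level + n) (by omega)
  rw [show (vp 0).level + n - (vp 0).level = n from by ring] at h2
  rw [← h2]
  exact hN _ (by omega)

lemma trunc_eq_vp (h3 : ∀ n : ℤ, (vp (n + 1)).parent = vp n) (w : Vertex q) :
    ∃ K : ℤ, ∀ m ≤ K, w.trunc m = vp (m - (vp 0).level) := by
  obtain ⟨N, hN⟩ := exists_trunc_zero w
  obtain ⟨M, hM⟩ := vp_eq_zeroVtx h3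
  refine ⟨min N (M + (vp 0).level), fun m hm => ?_⟩
  rw [hN m (by omega), hM (m - (vp 0).level) (by omega),
    show (vp 0).level + (m - (vp 0).level) = m from by ring]

variable (c vp)

/-- The level-preserving standardising map. -/
def phi0 (h3 : ∀ n : ℤ, (vp (n + 1)).parent = vp n)
    (h4 : ∀ n : ℤ, (c (vp n) (vp (n + 1)) : ℕ) = 0) (w : Vertex q) : Vertex q where
  level := w.level
  lab := fun i => if i ≤ w.level then toFinQ (c (w.trunc (i - 1)) (w.trunc i)) else 0
  zero_gt := by
    intro i hi
    show ((if i ≤ w.level then toFinQ (c (w.trunc (i - 1)) (w.trunc i)) else 0 : Fin q) : ℕ) = 0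
    rw [if_neg (by omega)]
    simp
  bdd := by
    obtain ⟨K, hK⟩ := trunc_eq_vp h3 w
    have hq0 : 0 < q := Nat.pos_of_ne_zero (NeZero.ne q)
    refine ⟨min K w.level, fun i hi => ?_⟩
    show ((if i ≤ w.level then toFinQ (c (w.trunc (i - 1)) (w.trunc i)) else 0 : Fin q) : ℕ) = 0
    rw [if_pos (by omega), hK (i - 1) (by omega), hK i (by omega)]
    have h := h4 (i - 1 - (vp 0).level)
    rw [show i - 1 - (vp 0).level + 1 = i - (vp 0).level from by ring] at h
    rw [toFinQ_val (by omega), h]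

variable {c vp}
variable {h3 : ∀ n : ℤ, (vp (n + 1)).parent = vp n}
variable {h4 : ∀ n : ℤ, (c (vp n) (vp (n + 1)) : ℕ) = 0}

lemma phi0_level (w : Vertex q) : (phi0 c vp h3 h4 w).level = w.level := rfl

lemma phi0_lab (w : Vertex q) (i : ℤ) :
    (phi0 c vp h3 h4 w).lab i
      = if i ≤ w.level then toFinQ (c (w.trunc (i - 1)) (w.trunc i)) else 0 := rfl

lemma phi0_parent (w : Vertex q) :
    phi0 c vp h3 h4 w.parent = (phi0 c vp h3 h4 w).parent := by
  refine Vertex.ext rfl ?_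
  funext i
  show (if i ≤ w.level - 1 then toFinQ (c (w.parent.trunc (i - 1)) (w.parent.trunc i)) else 0)
      = (if w.level - 1 < i then 0
          else if i ≤ w.level then toFinQ (c (w.trunc (i - 1)) (w.trunc i)) else 0)
  by_cases h : i ≤ w.level - 1
  · rw [if_pos h, if_neg (by omega), if_pos (by omega),
      trunc_parent w (show i - 1 ≤ w.level - 1 from by omega),
      trunc_parent w (show i ≤ w.level - 1 from h)]
  · rw [if_neg h, if_pos (by omega)]

lemma phi0_child_eq
    (h1 : ∀ v : Vertex q, ∀ j : Fin (q + 1),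
      ∃! w : Vertex q, (w.parent = v ∨ w = v.parent) ∧ c v w = j)
    (h2 : ∀ v : Vertex q, (c v v.parent : ℕ) = q)
    {v w : Vertex q} (hw : w.parent = v) :
    phi0 c vp h3 h4 w = (phi0 c vp h3 h4 v).child (toFinQ (c v w)) := by
  have hl : w.level = v.level + 1 := level_of_parent_eq hw
  have hp : (phi0 c vp h3 h4 w).parent = phi0 c vp h3 h4 v := by rw [← phi0_parent, hw]
  have hch := child_eq hp
  rw [hch]
  congr 1
  rw [phi0_level, phi0_lab, if_pos (by omega)]
  have e1 : w.trunc (v.level + 1 - 1) = v := by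
    rw [show v.level + 1 - 1 = w.level - 1 from by omega, trunc_pred, hw]
  have e2 : w.trunc (v.level + 1) = w := by rw [← hl, trunc_self]
  rw [e1, e2]

lemma phi0_vp (n : ℤ) : phi0 c vp h3 h4 (vp n) = zeroVtx q ((vp 0).level + n) := by
  have hL := vp_level h3 n
  refine Vertex.ext (by rw [phi0_level]; exact hL) ?_
  funext i
  rw [phi0_lab]
  show _ = (0 : Fin q)
  by_cases hi : i ≤ (vp n).level
  · rw [if_pos hi, vp_trunc h3 (by omega), vp_trunc h3 (by omega)]
    apply toFinQ_eq_zero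
    have h := h4 (i - 1 - (vp 0).level)
    rw [show i - 1 - (vp 0).level + 1 = i - (vp 0).level from by ring] at h
    exact h
  · rw [if_neg hi]

lemma phi0_inj
    (h1 : ∀ v : Vertex q, ∀ j : Fin (q + 1),
      ∃! w : Vertex q, (w.parent = v ∨ w = v.parent) ∧ c v w = j)
    (h2 : ∀ v : Vertex q, (c v v.parent : ℕ) = q) :
    Function.Injective (phi0 c vp h3 h4) := by
  intro w w' hww
  have hlev : w.level = w'.level := by
    have h := congrArg Vertex.level hww
    rwa [phi0_level, phi0_level] at h
  obtain ⟨K1, hK1⟩ := trunc_eq_vp h3 w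
  obtain ⟨K2, hK2⟩ := trunc_eq_vp h3 w'
  set K := min (min K1 K2) w.level with hKdef
  have key : ∀ m : ℤ, K ≤ m → (m ≤ w.level → w.trunc m = w'.trunc m) := by
    refine Int.le_induction ?_ ?_
    · intro _
      rw [hK1 K (by omega), hK2 K (by omega)]
    · intro n hn ih hn1
      have ha := ih (by omega)
      have hlab := congrArg (fun v : Vertex q => v.lab (n + 1)) hww
      simp only [phi0_lab] at hlab
      rw [if_pos (by omega), if_pos (by omega),
        show n + 1 - 1 = n from by ring, ha] at hlab
      have hp1 : (w.trunc (n + 1)).parent = w'.trunc n := by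
        rw [parent_trunc, show n + 1 - 1 = n from by ring, ha]
      have hp2 : (w'.trunc (n + 1)).parent = w'.trunc n := by
        rw [parent_trunc, show n + 1 - 1 = n from by ring]
      have hv1 : (c (w'.trunc n) (w.trunc (n + 1)) : ℕ) < q := c_lt h1 h2 hp1
      have hv2 : (c (w'.trunc n) (w'.trunc (n + 1)) : ℕ) < q := c_lt h1 h2 hp2
      have hcc : c (w'.trunc n) (w.trunc (n + 1)) = c (w'.trunc n) (w'.trunc (n + 1)) := by
        apply Fin.ext
        rw [← toFinQ_val hv1, ← toFinQ_val hv2, hlab]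
      rw [hlev] at hn1  -- ensure? no; keep
      exact (exists_child_label h1 h2 (w'.trunc n) _ hv1).unique ⟨hp1, rfl⟩ ⟨hp2, hcc.symm⟩
  have h := key w.level (by omega) le_rfl
  rw [trunc_self, hlev, trunc_self] at h
  exact h

end Phi0

section Phi0Surj

variable {c : Vertex q → Vertex q → Fin (q + 1)} {vp : ℤ → Vertex q}
variable {h3 : ∀ n : ℤ, (vp (n + 1)).parent = vp n}
variable {h4 : ∀ n : ℤ, (c (vp n) (vp (n + 1)) : ℕ) = 0}

lemma phi0_surj
    (h1 : ∀ v : Vertex q, ∀ j : Fin (q + 1),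
      ∃! w : Vertex q, (w.parent = v ∨ w = v.parent) ∧ c v w = j)
    (h2 : ∀ v : Vertex q, (c v v.parent : ℕ) = q) :
    Function.Surjective (phi0 c vp h3 h4) := by
  have hq0 : 0 < q := Nat.pos_of_ne_zero (NeZero.ne q)
  intro u
  obtain ⟨Nu, hNu⟩ := u.bdd
  obtain ⟨M, hM⟩ := vp_eq_zeroVtx h3
  set L := (vp 0).level with hLdef
  set k := min (min (M + L) (Nu - 1)) u.level with hkdef
  have hcast : ∀ i : ℤ, ((Fin.castLE (Nat.le_succ q) (u.lab i) : Fin (q + 1)) : ℕ) < q := by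
    intro i
    simpa using (u.lab i).isLt
  let f : Vertex q → ℤ → Vertex q := fun a i =>
    Classical.choose (exists_child_label h1 h2 a (Fin.castLE (Nat.le_succ q) (u.lab i)) (hcast i))
  have hf : ∀ (a : Vertex q) (i : ℤ), (f a i).parent = a ∧
      c a (f a i) = Fin.castLE (Nat.le_succ q) (u.lab i) := fun a i =>
    Classical.choose_spec (exists_child_label h1 h2 a (Fin.castLE (Nat.le_succ q) (u.lab i)) (hcast i)) |>.1
  let seq : ℕ → Vertex q := fun j => Nat.rec (zeroVtx q k) (fun j a => f a (k + (j : ℤ) + 1)) j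
  have hseq0 : seq 0 = zeroVtx q k := rfl
  have hseqS : ∀ j : ℕ, seq (j + 1) = f (seq j) (k + (j : ℤ) + 1) := fun _ => rfl
  have hseqP : ∀ j : ℕ, (seq (j + 1)).parent = seq j := by
    intro j; rw [hseqS]; exact (hf _ _).1
  have hseqC : ∀ j : ℕ, c (seq j) (seq (j + 1)) = Fin.castLE (Nat.le_succ q) (u.lab (k + (j : ℤ) + 1)) := by
    intro j; rw [hseqS]; exact (hf _ _).2
  have hlev : ∀ j : ℕ, (seq j).level = k + j := by
    intro j
    induction j with
    | zero => simp [hseq0, zeroVtx_level]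
    | succ j ih =>
        have h := level_of_parent_eq (hseqP j)
        rw [h, ih]
        push_cast; ring
  set J := (u.level - k).toNat with hJdef
  have hkJ : k + (J : ℤ) = u.level := by omega
  have htr : ∀ d : ℕ, d ≤ J → (seq J).trunc (k + ((J - d : ℕ) : ℤ)) = seq (J - d) := by
    intro d
    induction d with
    | zero =>
        intro _
        simp only [Nat.sub_zero]
        rw [show k + (J : ℤ) = (seq J).level from (hlev J).symm, trunc_self]
    | succ d ih =>
        intro hd
        have hd' : d ≤ J := by omega
        have e2 : k + ((J - (d + 1) : ℕ) : ℤ) = (k + ((J - d : ℕ) : ℤ)) - 1 := by omega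
        rw [e2, ← parent_trunc, ih hd']
        have e3 : J - d = (J - (d + 1)) + 1 := by omega
        rw [e3]
        exact hseqP _
  have htr' : ∀ j : ℕ, j ≤ J → (seq J).trunc (k + (j : ℤ)) = seq j := by
    intro j hj
    have := htr (J - j) (by omega)
    rwa [show J - (J - j) = j from by omega] at this
  refine ⟨seq J, ?_⟩
  have hwl : (seq J).level = u.level := by rw [hlev J]; omega
  refine Vertex.ext (by rw [phi0_level, hwl]) ?_
  funext i
  rw [phi0_lab]
  by_cases hi : i ≤ (seq J).level
  · rw [if_pos hi]
    by_cases hik : k < i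
    · obtain ⟨j, hij, hjJ⟩ : ∃ j : ℕ, i = k + ((j : ℤ) + 1) ∧ j + 1 ≤ J := by
        refine ⟨(i - k - 1).toNat, by omega, by omega⟩
      have t1 : (seq J).trunc (i - 1) = seq j := by
        rw [show i - 1 = k + (j : ℤ) from by omega]
        exact htr' j (by omega)
      have t2 : (seq J).trunc i = seq (j + 1) := by
        rw [show i = k + ((j + 1 : ℕ) : ℤ) from by push_cast; omega]
        exact htr' (j + 1) hjJ
      rw [t1, t2, hseqC j, show k + (j : ℤ) + 1 = i from by omega, toFinQ_castLE]
    · have hzt : ∀ m : ℤ, m ≤ k → (seq J).trunc m = zeroVtx q m := by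
        intro m hm
        rw [← trunc_trunc (seq J) hm, show k = k + ((0 : ℕ) : ℤ) from by push_cast; ring,
          htr' 0 (by omega), hseq0, trunc_zeroVtx]
      have hvpz : ∀ m : ℤ, m ≤ k → zeroVtx q m = vp (m - L) := by
        intro m hm
        rw [hM (m - L) (by omega), show L + (m - L) = m from by ring]
      rw [hzt (i - 1) (by omega), hzt i (by omega), hvpz (i - 1) (by omega), hvpz i (by omega)]
      have h := h4 (i - 1 - L)
      rw [show i - 1 - L + 1 = i - L from by ring] at h
      rw [toFinQ_eq_zero h]
      exact (lab_eq_zero (hNu i (by omega))).symm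
  · rw [if_neg hi]
    exact (lab_eq_zero (u.zero_gt i (by omega))).symm

end Phi0Surj

section Shift

lemma shiftMap_level (k : ℤ) (v : Vertex q) : (shiftMap k v).level = v.level + k := rfl

lemma shiftMap_parent (k : ℤ) (v : Vertex q) :
    shiftMap k v.parent = (shiftMap k v).parent := by
  refine Vertex.ext (by show v.level - 1 + k = v.level + k - 1; ring) ?_
  funext i
  show (if v.level - 1 < i - k then 0 else v.lab (i - k))
      = (if v.level + k - 1 < i then 0 else v.lab (i - k))
  by_cases h : v.level - 1 < i - k
  · rw [if_pos h, if_pos (by omega)]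
  · rw [if_neg h, if_neg (by omega)]

lemma shiftMap_child (k : ℤ) (v : Vertex q) (j : Fin q) :
    shiftMap k (v.child j) = (shiftMap k v).child j := by
  refine Vertex.ext (by show v.level + 1 + k = v.level + k + 1; ring) ?_
  funext i
  show (if i - k = v.level + 1 then j else v.lab (i - k))
      = (if i = v.level + k + 1 then j else v.lab (i - k))
  by_cases h : i - k = v.level + 1
  · rw [if_pos h, if_pos (by omega)]
  · rw [if_neg h, if_neg (by omega)]

lemma shiftMap_zeroVtx (k n : ℤ) : shiftMap k (zeroVtx q n) = zeroVtx q (n + k) := by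
  refine Vertex.ext rfl ?_
  funext i
  rfl

end Shift

section Std

lemma stdLabel_of_parent {v w : Vertex q} (h : w.parent = v) :
    stdLabel q v w = Fin.castLE (Nat.le_succ q) (w.lab (v.level + 1)) := by
  simp only [stdLabel]
  rw [if_pos h]

lemma stdLabel_parent (v : Vertex q) : stdLabel q v v.parent = Fin.last q := by
  simp only [stdLabel]
  rw [if_neg (parent_parent_ne v)]

lemma std_existsUnique (v : Vertex q) (j : Fin (q + 1)) :
    ∃! w : Vertex q, (w.parent = v ∨ w = v.parent) ∧ stdLabel q v w = j := by
  by_cases hj : (j : ℕ) < q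
  · refine ⟨v.child ⟨j, hj⟩, ⟨Or.inl (parent_child v _), ?_⟩, ?_⟩
    · rw [stdLabel_of_parent (parent_child v _), child_lab_top]
      apply Fin.ext
      simp
    · rintro w ⟨hw1 | hw1, hw2⟩
      · rw [stdLabel_of_parent hw1] at hw2
        rw [child_eq hw1]
        congr 1
        apply Fin.ext
        have h := congrArg Fin.val hw2
        simpa using h
      · exfalso
        rw [hw1, stdLabel_parent] at hw2
        have h := congrArg Fin.val hw2
        rw [Fin.val_last] at h
        omega
  · have hj' : j = Fin.last q := by
      apply Fin.ext
      rw [Fin.val_last]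
      have := j.isLt
      omega
    subst hj'
    refine ⟨v.parent, ⟨Or.inr rfl, stdLabel_parent v⟩, ?_⟩
    rintro w ⟨hw1 | hw1, hw2⟩
    · exfalso
      rw [stdLabel_of_parent hw1] at hw2
      have h := congrArg Fin.val hw2
      rw [Fin.val_last] at h
      simp only [Fin.coe_castLE] at h
      have := (w.lab (v.level + 1)).isLt
      omega
    · exact hw1

lemma std_path (n : ℤ) : (stdLabel q (zeroVtx q n) (zeroVtx q (n + 1)) : ℕ) = 0 := by
  have hp : (zeroVtx q (n + 1)).parent = zeroVtx q n := parent_zeroVtx n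
  rw [stdLabel_of_parent hp]
  simp [zeroVtx_lab]

end Std

section Desc

lemma iterate_parent_trunc (w : Vertex q) :
    ∀ d : ℕ, Vertex.parent^[d] w = w.trunc (w.level - d) := by
  intro d
  induction d with
  | zero => simpa using (trunc_self w).symm
  | succ d ih =>
      rw [Function.iterate_succ_apply', ih, parent_trunc]
      congr 1
      push_cast
      ring

lemma descendant_iff (u w : Vertex q) :
    Vertex.Descendant u w ↔
      u.level ≤ w.level ∧ Vertex.parent^[(w.level - u.level).toNat] w = u := by
  unfold Vertex.Descendant
  constructor
  · rintro ⟨h, h2⟩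
    refine ⟨h, ?_⟩
    rw [iterate_parent_trunc,
      show w.level - (((w.level - u.level).toNat : ℕ) : ℤ) = u.level from by omega]
    exact h2
  · rintro ⟨h, h2⟩
    refine ⟨h, ?_⟩
    rw [iterate_parent_trunc,
      show w.level - (((w.level - u.level).toNat : ℕ) : ℤ) = u.level from by omega] at h2
    exact h2

lemma descendant_map {x : Equiv.Perm (Vertex q)} (hx : ∀ v, x v.parent = (x v).parent)
    {t : ℤ} (hlvl : ∀ v, (x v).level = v.level + t) {u w : Vertex q}
    (h : Vertex.Descendant u w) : Vertex.Descendant (x u) (x w) := by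
  rw [descendant_iff] at h ⊢
  have hiter : ∀ (d : ℕ) (v : Vertex q), x (Vertex.parent^[d] v) = Vertex.parent^[d] (x v) := by
    intro d
    induction d with
    | zero => intro v; rfl
    | succ d ih =>
        intro v
        rw [Function.iterate_succ_apply', Function.iterate_succ_apply', hx, ih]
  refine ⟨by rw [hlvl, hlvl]; omega, ?_⟩
  rw [show ((x w).level - (x u).level) = w.level - u.level from by rw [hlvl, hlvl]; ring,
    ← hiter, h.2]

end Desc

section Topo

lemma conj_continuous (φ : Equiv.Perm (Vertex q)) :
    Continuous (fun g : Equiv.Perm (Vertex q) => φ⁻¹ * g * φ) := by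
  letI : TopologicalSpace (Vertex q) := ⊥
  haveI : DiscreteTopology (Vertex q) := ⟨rfl⟩
  apply continuous_induced_rng.mpr
  have he : Continuous (fun g : Equiv.Perm (Vertex q) =>
      ((g : Vertex q → Vertex q), ((g⁻¹ : Equiv.Perm (Vertex q)) : Vertex q → Vertex q))) :=
    continuous_induced_dom
  refine Continuous.prodMk ?_ ?_
  · apply continuous_pi
    intro x
    have key : (fun g : Equiv.Perm (Vertex q) => ((φ⁻¹ * g * φ : Equiv.Perm (Vertex q)) : Vertex q → Vertex q) x)
        = (fun y : Vertex q => φ⁻¹ y) ∘ (fun f : Vertex q → Vertex q => f (φ x)) ∘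
          (fun g : Equiv.Perm (Vertex q) => (g : Vertex q → Vertex q)) := by
      funext g
      simp [Equiv.Perm.mul_apply]
    show Continuous (fun g : Equiv.Perm (Vertex q) => ((φ⁻¹ * g * φ : Equiv.Perm (Vertex q)) : Vertex q → Vertex q) x)
    rw [key]
    exact continuous_of_discreteTopology.comp ((continuous_apply (φ x)).comp (continuous_fst.comp he))
  · apply continuous_pi
    intro x
    have key : (fun g : Equiv.Perm (Vertex q) => (((φ⁻¹ * g * φ)⁻¹ : Equiv.Perm (Vertex q)) : Vertex q → Vertex q) x)
        = (fun y : Vertex q => φ⁻¹ y) ∘ (fun f : Vertex q → Vertex q => f (φ x)) ∘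
          (fun g : Equiv.Perm (Vertex q) => ((g⁻¹ : Equiv.Perm (Vertex q)) : Vertex q → Vertex q)) := by
      funext g
      simp [mul_inv_rev, Equiv.Perm.mul_apply]
    show Continuous (fun g : Equiv.Perm (Vertex q) => (((φ⁻¹ * g * φ)⁻¹ : Equiv.Perm (Vertex q)) : Vertex q → Vertex q) x)
    rw [key]
    exact continuous_of_discreteTopology.comp ((continuous_apply (φ x)).comp (continuous_snd.comp he))

lemma conj_closed (φ : Equiv.Perm (Vertex q)) {P : Subgroup (Equiv.Perm (Vertex q))}
    (h : IsClosed (P : Set (Equiv.Perm (Vertex q)))) :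
    IsClosed ((P.map (MulAut.conj φ).toMonoidHom : Subgroup _) : Set (Equiv.Perm (Vertex q))) := by
  have hset : ((P.map (MulAut.conj φ).toMonoidHom : Subgroup _) : Set (Equiv.Perm (Vertex q)))
      = (fun g : Equiv.Perm (Vertex q) => φ⁻¹ * g * φ) ⁻¹' (P : Set _) := by
    ext g
    simp only [Set.mem_preimage, SetLike.mem_coe, Subgroup.mem_map,
      MulEquiv.toMonoidHom_eq_coe, MonoidHom.coe_coe, MulAut.conj_apply]
    constructor
    · rintro ⟨p, hp, rfl⟩
      convert hp using 1
      group
    · intro hg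
      refine ⟨φ⁻¹ * g * φ, hg, ?_⟩
      group
  rw [hset]
  exact h.preimage (conj_continuous φ)

end Topo

end S7


end Scale

open Scale in
/-- Every `P`-labelling is conjugate to the standard labelling: there is an
automorphism `φ` fixing `ω`, sending the distinguished path to the zero path and the
labelling to the standard one, and `φPφ⁻¹` is a scale group for which the standard
labelling is a `P`-labelling. -/
theorem statement_7 (q : ℕ) [NeZero q] (hq : 2 ≤ q)
    (P : Subgroup (Equiv.Perm (Vertex q))) (hP : IsScaleGroup P)
    (c : Vertex q → Vertex q → Fin (q + 1)) (vp : ℤ → Vertex q)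
    (hc : IsPLabelling P c vp) :
    ∃ φ : Equiv.Perm (Vertex q), φ ∈ IsomOmega q ∧
      (∀ n : ℤ, φ (vp n) = zeroVtx q n) ∧
      (∀ v w : Vertex q, Vertex.parent w = v →
        ∃ j : Fin q, (j : ℕ) = (c v w : ℕ) ∧ φ w = Vertex.child (φ v) j) ∧
      IsScaleGroup (P.map (MulAut.conj φ).toMonoidHom) ∧
      IsPLabelling (P.map (MulAut.conj φ).toMonoidHom) (stdLabel q)
        (fun n => zeroVtx q n) := by
  classical
  obtain ⟨hPle, hPcl, hPtr⟩ := hP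
  obtain ⟨h1, h2, h3, h4, h5⟩ := hc
  have hbij : Function.Bijective (S7.phi0 c vp h3 h4) :=
    ⟨S7.phi0_inj h1 h2, S7.phi0_surj h1 h2⟩
  set φ : Equiv.Perm (Vertex q) :=
    (Equiv.ofBijective _ hbij).trans (shiftPerm q (-(vp 0).level)) with hφdef
  have hφ : ∀ w, φ w = shiftMap (-(vp 0).level) (S7.phi0 c vp h3 h4 w) := fun w => rfl
  have hφP : ∀ v, φ (Vertex.parent v) = Vertex.parent (φ v) := by
    intro v
    rw [hφ, hφ, S7.phi0_parent, S7.shiftMap_parent]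
  have hφIsom : φ ∈ IsomOmega q := hφP
  have hφlevel : ∀ v, (φ v).level = v.level - (vp 0).level := by
    intro v
    rw [hφ, S7.shiftMap_level, S7.phi0_level]
    ring
  have hφvp : ∀ n : ℤ, φ (vp n) = zeroVtx q n := by
    intro n
    rw [hφ, S7.phi0_vp, S7.shiftMap_zeroVtx,
      show (vp 0).level + n + -(vp 0).level = n from by ring]
  have hlabel : ∀ v w : Vertex q, Vertex.parent w = v →
      ∃ j : Fin q, (j : ℕ) = (c v w : ℕ) ∧ φ w = Vertex.child (φ v) j := by
    intro v w hw
    refine ⟨toFinQ (c v w), S7.toFinQ_val (S7.c_lt h1 h2 hw), ?_⟩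
    rw [hφ, hφ, S7.phi0_child_eq h1 h2 hw, S7.shiftMap_child]
  have hφinvP : ∀ v, (φ⁻¹ : Equiv.Perm (Vertex q)) (Vertex.parent v)
      = Vertex.parent ((φ⁻¹ : Equiv.Perm (Vertex q)) v) := (IsomOmega q).inv_mem hφIsom
  have hφinvlevel : ∀ v, ((φ⁻¹ : Equiv.Perm (Vertex q)) v).level = v.level + (vp 0).level := by
    intro v
    have h := hφlevel (φ⁻¹ v)
    rw [show ∀ x, φ (φ⁻¹ x) = x from φ.apply_symm_apply] at h
    omega
  have hconv : ∀ V W : Vertex q, W.parent = V → stdLabel q (φ V) (φ W) = c V W := by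
    intro V W h
    obtain ⟨j, hj1, hj2⟩ := hlabel V W h
    rw [hj2, S7.stdLabel_of_parent (S7.parent_child _ _), S7.child_lab_top]
    apply Fin.ext
    rw [Fin.coe_castLE, hj1]
  have happ : ∀ (x : Equiv.Perm (Vertex q)) (u : Vertex q),
      (φ * x * φ⁻¹ : Equiv.Perm (Vertex q)) u = φ (x ((φ⁻¹ : Equiv.Perm (Vertex q)) u)) := by
    intro x u
    rw [Equiv.Perm.mul_apply, Equiv.Perm.mul_apply]
  have hmem : ∀ x : Equiv.Perm (Vertex q), x ∈ P →
      φ * x * φ⁻¹ ∈ P.map (MulAut.conj φ).toMonoidHom := by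
    intro x hx
    exact Subgroup.mem_map.mpr ⟨x, hx, by simp⟩
  refine ⟨φ, hφIsom, hφvp, hlabel, ⟨?_, S7.conj_closed φ hPcl, ?_⟩, ?_, ?_, ?_, ?_, ?_⟩
  · -- P' ≤ IsomOmega
    intro g hg
    obtain ⟨p, hp, rfl⟩ := Subgroup.mem_map.mp hg
    have he : (MulAut.conj φ).toMonoidHom p = φ * p * φ⁻¹ := by simp
    rw [he]
    exact mul_mem (mul_mem hφIsom (hPle hp)) ((IsomOmega q).inv_mem hφIsom)
  · -- transitivity
    intro v w
    obtain ⟨x, hx, hxv⟩ := hPtr (φ⁻¹ v) (φ⁻¹ w)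
    refine ⟨φ * x * φ⁻¹, hmem x hx, ?_⟩
    rw [happ, hxv, show ∀ x, φ (φ⁻¹ x) = x from φ.apply_symm_apply]
  · -- existsUnique labels
    exact fun v j => S7.std_existsUnique v j
  · -- parent label is q
    intro v
    rw [S7.stdLabel_parent v, Fin.val_last]
  · -- zero path is a path
    exact fun n => S7.parent_zeroVtx n
  · -- labels along zero path
    exact fun n => S7.std_path n
  · -- transitivity with label preservation
    intro u₁ u₂
    obtain ⟨x, hxP, hxv, hxlab⟩ := h5 (φ⁻¹ u₁) (φ⁻¹ u₂)
    have hxP' : ∀ v, x (Vertex.parent v) = Vertex.parent (x v) := hPle hxP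
    refine ⟨φ * x * φ⁻¹, hmem x hxP, ?_, ?_⟩
    · rw [happ, hxv, show ∀ x, φ (φ⁻¹ x) = x from φ.apply_symm_apply]
    · intro w w' hdw hdw' hedge
      have hDW : Vertex.Descendant ((φ⁻¹ : Equiv.Perm (Vertex q)) u₁) (φ⁻¹ w) :=
        S7.descendant_map hφinvP hφinvlevel hdw
      have hDW' : Vertex.Descendant ((φ⁻¹ : Equiv.Perm (Vertex q)) u₁) (φ⁻¹ w') :=
        S7.descendant_map hφinvP hφinvlevel hdw'
      rcases hedge with hedge | hedge
      · have hx'p : (φ * x * φ⁻¹ : Equiv.Perm (Vertex q)) w'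
            = Vertex.parent ((φ * x * φ⁻¹ : Equiv.Perm (Vertex q)) w) := by
          rw [happ, happ, ← hedge, hφinvP, hxP', hφP]
        rw [hx'p, ← hedge, S7.stdLabel_parent, S7.stdLabel_parent]
      · have hpW' : Vertex.parent ((φ⁻¹ : Equiv.Perm (Vertex q)) w')
            = (φ⁻¹ : Equiv.Perm (Vertex q)) w := by
          rw [← hφinvP, hedge]
        have hpxW' : (x ((φ⁻¹ : Equiv.Perm (Vertex q)) w')).parent
            = x ((φ⁻¹ : Equiv.Perm (Vertex q)) w) := by
          rw [← hxP', hpW']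
        have l1 : stdLabel q w w' = c ((φ⁻¹ : Equiv.Perm (Vertex q)) w)
            ((φ⁻¹ : Equiv.Perm (Vertex q)) w') := by
          conv_lhs => rw [show w = φ ((φ⁻¹ : Equiv.Perm (Vertex q)) w) from
              (φ.apply_symm_apply w).symm,
            show w' = φ ((φ⁻¹ : Equiv.Perm (Vertex q)) w') from
              (φ.apply_symm_apply w').symm]
          exact hconv _ _ hpW'
        have l2 : stdLabel q ((φ * x * φ⁻¹ : Equiv.Perm (Vertex q)) w)
            ((φ * x * φ⁻¹ : Equiv.Perm (Vertex q)) w')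
            = c (x ((φ⁻¹ : Equiv.Perm (Vertex q)) w)) (x ((φ⁻¹ : Equiv.Perm (Vertex q)) w')) := by
          rw [happ, happ]
          exact hconv _ _ hpxW'
        rw [l1, l2]
        exact hxlab _ _ hDW hDW' (Or.inr hpW')
end

section
/- Let P be a scale group acting on T_{q+1} and let c be a P-labelling. For each vertex v set P|_v = {φ^c_{x(v)} ∘ x ∘ (φ^c_v)^{−1} : x ∈ P} ⊆ Isom(T_{q,q}). Then P|_v is the same set for every vertex v, and it is a closed, self-replicating subgroup of Isom(T_{q,q}). -/
namespace Scale

/-! ### Auxiliary development -/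

section Aux

variable {q : ℕ} [NeZero q]

lemma lab_eq_zero {v : Vertex q} {i : ℤ} (h : v.level < i) : v.lab i = 0 :=
  Fin.ext (by simpa using v.zero_gt i h)

lemma trunc_level (v : Vertex q) (m : ℤ) : (v.trunc m).level = m := rfl

lemma parent_level (v : Vertex q) : v.parent.level = v.level - 1 := rfl

lemma trunc_self (v : Vertex q) : v.trunc v.level = v := by
  refine Vertex.ext rfl ?_
  funext i
  show (if v.level < i then 0 else v.lab i) = v.lab i
  split
  · exact (lab_eq_zero ‹_›).symm
  · rfl

lemma parent_eq_trunc (v : Vertex q) : v.parent = v.trunc (v.level - 1) := rfl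

lemma trunc_trunc (v : Vertex q) {m m' : ℤ} (h : m' ≤ m) :
    (v.trunc m).trunc m' = v.trunc m' := by
  refine Vertex.ext rfl ?_
  funext i
  show (if m' < i then 0 else if m < i then 0 else v.lab i) = (if m' < i then 0 else v.lab i)
  by_cases h1 : m' < i
  · simp [h1]
  · have h2 : ¬ m < i := by omega
    simp [h1, h2]

/-- `k`-fold parent. -/
def paIter (k : ℕ) (v : Vertex q) : Vertex q := Vertex.parent^[k] v

lemma paIter_level (k : ℕ) (v : Vertex q) : (paIter k v).level = v.level - k := by
  induction k with
  | zero => simp [paIter]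
  | succ k ih =>
    show Vertex.level (Vertex.parent^[k + 1] v) = _
    rw [Function.iterate_succ_apply']
    have h : (Vertex.parent (Vertex.parent^[k] v)).level = (Vertex.parent^[k] v).level - 1 := rfl
    rw [h]
    have : (Vertex.parent^[k] v).level = v.level - k := ih
    rw [this]
    push_cast
    ring

lemma paIter_eq_trunc (k : ℕ) (v : Vertex q) : paIter k v = v.trunc (v.level - k) := by
  induction k with
  | zero => simpa [paIter] using (trunc_self v).symm
  | succ k ih =>
    show Vertex.parent^[k + 1] v = _
    rw [Function.iterate_succ_apply']
    have hk : Vertex.parent^[k] v = v.trunc (v.level - k) := ih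
    rw [hk, parent_eq_trunc, trunc_level, trunc_trunc v (by omega : v.level - k - 1 ≤ v.level - k)]
    congr 1
    push_cast
    ring

lemma desc_refl (v : Vertex q) : Vertex.Descendant v v := ⟨le_refl _, trunc_self v⟩

lemma desc_trans {v u w : Vertex q} (h1 : Vertex.Descendant v u) (h2 : Vertex.Descendant u w) :
    Vertex.Descendant v w := by
  refine ⟨h1.1.trans h2.1, ?_⟩
  calc w.trunc v.level = (w.trunc u.level).trunc v.level := (trunc_trunc w h1.1).symm
    _ = u.trunc v.level := by rw [h2.2]
    _ = v := h1.2

lemma desc_paIter (k : ℕ) (w : Vertex q) : Vertex.Descendant (paIter k w) w := by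
  refine ⟨by rw [paIter_level]; omega, ?_⟩
  rw [paIter_level, paIter_eq_trunc]

lemma paIter_depth {v w : Vertex q} (h : Vertex.Descendant v w) :
    paIter (w.level - v.level).toNat w = v := by
  rw [paIter_eq_trunc]
  have h1 := h.1
  have : w.level - ((w.level - v.level).toNat : ℤ) = v.level := by omega
  rw [this, h.2]

lemma desc_level_eq {v w : Vertex q} (h : Vertex.Descendant v w) (hl : w.level = v.level) :
    w = v := by
  have := h.2
  rw [← hl, trunc_self] at this
  exact this.symm ▸ rfl

lemma desc_of_parent {v w : Vertex q} (h : w.parent = v) : Vertex.Descendant v w := by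
  have hl : v.level = w.level - 1 := by rw [← h]; rfl
  refine ⟨by omega, ?_⟩
  rw [← h, parent_eq_trunc]
  rfl

lemma desc_parent {u w : Vertex q} (h : Vertex.Descendant u w) (hlvl : u.level < w.level) :
    Vertex.Descendant u w.parent := by
  refine ⟨by rw [parent_level]; omega, ?_⟩
  rw [parent_eq_trunc, trunc_trunc w (by omega : u.level ≤ w.level - 1)]
  exact h.2

lemma mem_isomOmega {x : Equiv.Perm (Vertex q)} (h : x ∈ IsomOmega q) :
    ∀ w : Vertex q, x (Vertex.parent w) = Vertex.parent (x w) := h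

lemma isom_paIter {x : Equiv.Perm (Vertex q)} (hx : x ∈ IsomOmega q) (k : ℕ) (v : Vertex q) :
    x (paIter k v) = paIter k (x v) := by
  induction k with
  | zero => rfl
  | succ k ih =>
    show x (Vertex.parent^[k + 1] v) = Vertex.parent^[k + 1] (x v)
    rw [Function.iterate_succ_apply', Function.iterate_succ_apply']
    rw [mem_isomOmega hx]
    exact congrArg Vertex.parent ih

lemma isom_desc {x : Equiv.Perm (Vertex q)} (hx : x ∈ IsomOmega q) {v w : Vertex q}
    (h : Vertex.Descendant v w) :
    Vertex.Descendant (x v) (x w) ∧ (x w).level - (x v).level = w.level - v.level := by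
  set d := (w.level - v.level).toNat with hd
  have h1 : paIter d (x w) = x v := by rw [← isom_paIter hx, paIter_depth h]
  have h2 : (x v).level = (x w).level - d := by rw [← h1, paIter_level]
  have hd' : (d : ℤ) = w.level - v.level := by have := h.1; omega
  refine ⟨⟨by omega, ?_⟩, by omega⟩
  have h3 := paIter_eq_trunc d (x w)
  rw [h2, ← h3, h1]

end Aux

section LabelStrings

variable {q : ℕ} [NeZero q] {P : Subgroup (Equiv.Perm (Vertex q))}
  {c : Vertex q → Vertex q → Fin (q + 1)} {vp : ℤ → Vertex q}

lemma length_labelString (c : Vertex q → Vertex q → Fin (q + 1)) (w : Vertex q) (d : ℕ) :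
    (labelString c w d).length = d := by
  induction d generalizing w with
  | zero => rfl
  | succ d ih => simp [labelString, ih]

lemma labelString_cons (c : Vertex q → Vertex q → Fin (q + 1)) (w : Vertex q) (d : ℕ) :
    labelString c w (d + 1)
      = toFinQ (c (paIter (d + 1) w) (paIter d w)) :: labelString c w d := by
  induction d generalizing w with
  | zero => simp [labelString, paIter]
  | succ d ih =>
    show labelString c w.parent (d + 1) ++ [toFinQ (c w.parent w)]
        = toFinQ (c (paIter (d + 2) w) (paIter (d + 1) w)) :: labelString c w (d + 1)
    rw [ih w.parent]
    have h1 : paIter (d + 1) w.parent = paIter (d + 2) w :=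
      (Function.iterate_succ_apply Vertex.parent (d + 1) w).symm
    have h2 : paIter d w.parent = paIter (d + 1) w :=
      (Function.iterate_succ_apply Vertex.parent d w).symm
    rw [h1, h2, List.cons_append]
    rfl

lemma labelString_append (c : Vertex q → Vertex q → Fin (q + 1)) (w : Vertex q) (d₁ d₂ : ℕ) :
    labelString c w (d₁ + d₂) = labelString c (paIter d₂ w) d₁ ++ labelString c w d₂ := by
  induction d₂ generalizing w with
  | zero => simp [paIter, labelString]
  | succ d₂ ih =>
    show labelString c w.parent (d₁ + d₂) ++ [toFinQ (c w.parent w)]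
        = labelString c (paIter (d₂ + 1) w) d₁ ++ labelString c w (d₂ + 1)
    rw [ih w.parent]
    have h1 : paIter d₂ w.parent = paIter (d₂ + 1) w :=
      (Function.iterate_succ_apply Vertex.parent d₂ w).symm
    rw [h1, List.append_assoc]
    rfl

lemma phiStr_self (c : Vertex q → Vertex q → Fin (q + 1)) (v : Vertex q) :
    phiStr c v v = [] := by
  show labelString c v ((v.level - v.level).toNat) = []
  rw [sub_self]
  rfl

lemma length_phiStr (c : Vertex q → Vertex q → Fin (q + 1)) (v w : Vertex q) :
    (phiStr c v w).length = (w.level - v.level).toNat := length_labelString c w _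

lemma phiStr_append {c : Vertex q → Vertex q → Fin (q + 1)} {v u w : Vertex q}
    (h1 : Vertex.Descendant v u) (h2 : Vertex.Descendant u w) :
    phiStr c v w = phiStr c v u ++ phiStr c u w := by
  have ha := h1.1
  have hb := h2.1
  have hd : (w.level - v.level).toNat
      = (u.level - v.level).toNat + (w.level - u.level).toNat := by omega
  show labelString c w _ = _
  rw [hd, labelString_append, paIter_depth h2]
  rfl

lemma phiStr_cons {c : Vertex q → Vertex q → Fin (q + 1)} {v u w : Vertex q}
    (hu : u.parent = v) (h : Vertex.Descendant u w) :
    phiStr c v w = toFinQ (c v u) :: phiStr c u w := by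
  have hul : v.level = u.level - 1 := by rw [← hu]; rfl
  have hwu := h.1
  set d := (w.level - u.level).toNat with hdd
  have hdepth : (w.level - v.level).toNat = d + 1 := by omega
  show labelString c w _ = _
  rw [hdepth, labelString_cons]
  have hvw : Vertex.Descendant v w := desc_trans (desc_of_parent hu) h
  have h1 : paIter (d + 1) w = v := by
    have := paIter_depth hvw
    rwa [hdepth] at this
  have h2 : paIter d w = u := by
    have := paIter_depth h
    rwa [← hdd] at this
  rw [h1, h2]
  rfl

lemma labelString_map_aux {c : Vertex q → Vertex q → Fin (q + 1)}
    {x : Equiv.Perm (Vertex q)} (hx : x ∈ IsomOmega q) {u : Vertex q}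
    (hpres : ∀ w w' : Vertex q, Vertex.Descendant u w → Vertex.Descendant u w' →
      (Vertex.parent w = w' ∨ Vertex.parent w' = w) → c (x w) (x w') = c w w') :
    ∀ (d : ℕ) (w : Vertex q), Vertex.Descendant u w → (d : ℤ) ≤ w.level - u.level →
      labelString c (x w) d = labelString c w d := by
  intro d
  induction d with
  | zero => intro w _ _; rfl
  | succ d ih =>
    intro w hw hd
    have hlt : u.level < w.level := by omega
    have hpw : Vertex.Descendant u w.parent := desc_parent hw hlt
    have hpx : x w.parent = (x w).parent := mem_isomOmega hx w
    show labelString c (x w).parent d ++ [toFinQ (c (x w).parent (x w))]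
        = labelString c w.parent d ++ [toFinQ (c w.parent w)]
    rw [← hpx, ih w.parent hpw (by rw [parent_level]; push_cast at hd ⊢; omega),
      hpres w.parent w hpw hw (Or.inr rfl)]

lemma phiStr_map {c : Vertex q → Vertex q → Fin (q + 1)}
    {x : Equiv.Perm (Vertex q)} (hx : x ∈ IsomOmega q) {u : Vertex q}
    (hpres : ∀ w w' : Vertex q, Vertex.Descendant u w → Vertex.Descendant u w' →
      (Vertex.parent w = w' ∨ Vertex.parent w' = w) → c (x w) (x w') = c w w')
    {w : Vertex q} (h : Vertex.Descendant u w) :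
    phiStr c (x u) (x w) = phiStr c u w := by
  have hdep := (isom_desc hx h).2
  show labelString c (x w) _ = labelString c w _
  rw [hdep]
  exact labelString_map_aux hx hpres _ w h (by have := h.1; omega)

end LabelStrings

section Descend

variable {q : ℕ} [NeZero q] {P : Subgroup (Equiv.Perm (Vertex q))}
  {c : Vertex q → Vertex q → Fin (q + 1)} {vp : ℤ → Vertex q}

lemma child_label_lt (hc : IsPLabelling P c vp) {v w : Vertex q} (hw : w.parent = v) :
    (c v w : ℕ) < q := by
  by_contra h
  have hq' : (c v w : ℕ) = q := by have := (c v w).isLt; omega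
  obtain ⟨z, _, huz⟩ := hc.1 v (c v w)
  have h1 : w = z := huz w ⟨Or.inl hw, rfl⟩
  have h2 : v.parent = z := huz v.parent ⟨Or.inr rfl, Fin.ext (by rw [hc.2.1 v, hq'])⟩
  have h3 : w = v.parent := h1.trans h2.symm
  have hl1 : v.level = w.level - 1 := by rw [← hw]; rfl
  have hl2 : w.level = v.level - 1 := by rw [h3]; rfl
  omega

/-- The child of `v` whose edge is labelled `j`. -/
noncomputable def cchild (hc : IsPLabelling P c vp) (v : Vertex q) (j : Fin q) : Vertex q :=
  (hc.1 v (Fin.castLE (Nat.le_succ q) j)).exists.choose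

lemma cchild_label (hc : IsPLabelling P c vp) (v : Vertex q) (j : Fin q) :
    c v (cchild hc v j) = Fin.castLE (Nat.le_succ q) j :=
  (hc.1 v (Fin.castLE (Nat.le_succ q) j)).exists.choose_spec.2

lemma cchild_parent (hc : IsPLabelling P c vp) (v : Vertex q) (j : Fin q) :
    (cchild hc v j).parent = v := by
  rcases (hc.1 v (Fin.castLE (Nat.le_succ q) j)).exists.choose_spec.1 with h | h
  · exact h
  · exfalso
    have h2 : (c v (cchild hc v j) : ℕ) = q := by
      show (c v (hc.1 v (Fin.castLE (Nat.le_succ q) j)).exists.choose : ℕ) = q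
      rw [h]
      exact hc.2.1 v
    rw [cchild_label hc v j] at h2
    have : (j : ℕ) < q := j.isLt
    simp only [Fin.coe_castLE] at h2
    omega

lemma toFinQ_castLE (j : Fin q) : toFinQ (Fin.castLE (Nat.le_succ q) j) = j := by
  have h : ((Fin.castLE (Nat.le_succ q) j : Fin (q + 1)) : ℕ) < q := j.isLt
  simp only [toFinQ, h, dif_pos]
  exact Fin.ext rfl

lemma castLE_toFinQ {j : Fin (q + 1)} (h : (j : ℕ) < q) :
    Fin.castLE (Nat.le_succ q) (toFinQ j) = j := by
  simp only [toFinQ, h, dif_pos]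
  exact Fin.ext rfl

lemma cchild_level (hc : IsPLabelling P c vp) (v : Vertex q) (j : Fin q) :
    (cchild hc v j).level = v.level + 1 := by
  have h := congrArg Vertex.level (cchild_parent hc v j)
  rw [parent_level] at h
  omega

/-- The unique child of `v` with a given label is `cchild`. -/
lemma cchild_eq (hc : IsPLabelling P c vp) {v u : Vertex q} (hu : u.parent = v) :
    cchild hc v (toFinQ (c v u)) = u := by
  have hlt : (c v u : ℕ) < q := child_label_lt hc hu
  obtain ⟨z, _, huz⟩ := hc.1 v (c v u)
  have h1 : u = z := huz u ⟨Or.inl hu, rfl⟩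
  have h2 : cchild hc v (toFinQ (c v u)) = z :=
    huz _ ⟨Or.inl (cchild_parent hc v _),
      by rw [cchild_label hc v (toFinQ (c v u)), castLE_toFinQ hlt]⟩
  rw [h2, ← h1]

/-- Descend from `v` along a string of labels. -/
noncomputable def descend (hc : IsPLabelling P c vp) : Vertex q → List (Fin q) → Vertex q
  | v, [] => v
  | v, j :: t => descend hc (cchild hc v j) t

lemma descend_desc (hc : IsPLabelling P c vp) (v : Vertex q) (l : List (Fin q)) :
    Vertex.Descendant v (descend hc v l) := by
  induction l generalizing v with
  | nil => exact desc_refl v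
  | cons j t ih => exact desc_trans (desc_of_parent (cchild_parent hc v j)) (ih _)

lemma descend_level (hc : IsPLabelling P c vp) (v : Vertex q) (l : List (Fin q)) :
    (descend hc v l).level = v.level + l.length := by
  induction l generalizing v with
  | nil => simp [descend]
  | cons j t ih =>
    show (descend hc (cchild hc v j) t).level = _
    rw [ih, cchild_level]
    simp
    omega

lemma descend_append (hc : IsPLabelling P c vp) (v : Vertex q) (l₁ l₂ : List (Fin q)) :
    descend hc v (l₁ ++ l₂) = descend hc (descend hc v l₁) l₂ := by
  induction l₁ generalizing v with
  | nil => rfl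
  | cons j t ih => exact ih (cchild hc v j)

lemma phiStr_descend (hc : IsPLabelling P c vp) (v : Vertex q) (l : List (Fin q)) :
    phiStr c v (descend hc v l) = l := by
  induction l generalizing v with
  | nil => exact phiStr_self c v
  | cons j t ih =>
    show phiStr c v (descend hc (cchild hc v j) t) = j :: t
    rw [phiStr_cons (cchild_parent hc v j) (descend_desc hc _ t), cchild_label hc v j,
      toFinQ_castLE, ih]

lemma descend_phiStr (hc : IsPLabelling P c vp) {v w : Vertex q}
    (h : Vertex.Descendant v w) : descend hc v (phiStr c v w) = w := by
  obtain ⟨d, hd⟩ : ∃ d, (w.level - v.level).toNat = d := ⟨_, rfl⟩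
  induction d generalizing v w with
  | zero =>
    have hw : w = v := desc_level_eq h (by have := h.1; omega)
    subst hw
    rw [phiStr_self]
    rfl
  | succ d ih =>
    set u := paIter d w with hu
    have hdu : Vertex.Descendant u w := desc_paIter d w
    have hul : u.level = w.level - d := paIter_level d w
    have hpu : u.parent = v := by
      have h1 : paIter (d + 1) w = v := by rw [← hd]; exact paIter_depth h
      rw [← h1]
      show u.parent = Vertex.parent^[d + 1] w
      rw [Function.iterate_succ_apply']
      rfl
    rw [phiStr_cons hpu hdu]
    show descend hc (cchild hc v (toFinQ (c v u))) (phiStr c u w) = w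
    rw [cchild_eq hc hpu]
    exact ih hdu (by omega)

end Descend

section Sect

variable {q : ℕ} [NeZero q] {P : Subgroup (Equiv.Perm (Vertex q))}
  {c : Vertex q → Vertex q → Fin (q + 1)} {vp : ℤ → Vertex q}

lemma sect_mono (hP : IsScaleGroup P) (hc : IsPLabelling P c vp) (v v' : Vertex q) :
    sectSet P c v ⊆ sectSet P c v' := by
  rintro g ⟨x, hxP, hx⟩
  obtain ⟨y, hyP, hyv, hypres⟩ := hc.2.2.2.2 v' v
  refine ⟨x * y, P.mul_mem hxP hyP, ?_⟩
  intro w hw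
  have hyo : y ∈ IsomOmega q := hP.1 hyP
  have h1 : phiStr c v' w = phiStr c v (y w) := by
    rw [← hyv]; exact (phiStr_map hyo hypres hw).symm
  have hyw : Vertex.Descendant v (y w) := by
    have := (isom_desc hyo hw).1
    rwa [hyv] at this
  rw [h1, hx (y w) hyw]
  have h2 : (x * y) v' = x v := by rw [Equiv.Perm.mul_apply, hyv]
  have h3 : (x * y) w = x (y w) := Equiv.Perm.mul_apply x y w
  rw [h2, h3]

lemma sect_eq (hP : IsScaleGroup P) (hc : IsPLabelling P c vp) (v v' : Vertex q) :
    sectSet P c v = sectSet P c v' :=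
  Set.Subset.antisymm (sect_mono hP hc v v') (sect_mono hP hc v' v)

lemma sect_norm (hP : IsScaleGroup P) (hc : IsPLabelling P c vp) {v : Vertex q}
    {g : Equiv.Perm (List (Fin q))} (hg : g ∈ sectSet P c v) :
    ∃ x ∈ P, x v = v ∧ ∀ w, Vertex.Descendant v w →
      g (phiStr c v w) = phiStr c v (x w) := by
  obtain ⟨x₀, hx₀P, hx₀⟩ := hg
  obtain ⟨z, hzP, hzv, hzpres⟩ := hc.2.2.2.2 (x₀ v) v
  refine ⟨z * x₀, P.mul_mem hzP hx₀P, by rw [Equiv.Perm.mul_apply, hzv], ?_⟩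
  intro w hw
  rw [hx₀ w hw]
  have hx₀w : Vertex.Descendant (x₀ v) (x₀ w) := (isom_desc (hP.1 hx₀P) hw).1
  have h1 := phiStr_map (hP.1 hzP) hzpres hx₀w
  rw [← h1, hzv, Equiv.Perm.mul_apply]

/-- Build the element of `Isom(T_{q,q})` induced at a fixed vertex by `x ∈ P` fixing `v`. -/
noncomputable def buildPerm (hP : IsScaleGroup P) (hc : IsPLabelling P c vp)
    {x : Equiv.Perm (Vertex q)} (hxP : x ∈ P) {v : Vertex q} (hxv : x v = v) :
    Equiv.Perm (List (Fin q)) where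
  toFun l := phiStr c v (x (descend hc v l))
  invFun l := phiStr c v (x⁻¹ (descend hc v l))
  left_inv l := by
    have hdesc : Vertex.Descendant v (x (descend hc v l)) := by
      have := (isom_desc (hP.1 hxP) (descend_desc hc v l)).1
      rwa [hxv] at this
    simp only
    rw [descend_phiStr hc hdesc, (show ∀ (f : Equiv.Perm (Vertex q)) y, f⁻¹ (f y) = y from fun f => f.symm_apply_apply), phiStr_descend hc v l]
  right_inv l := by
    have hdesc : Vertex.Descendant v (x⁻¹ (descend hc v l)) := by
      have := (isom_desc (hP.1 (P.inv_mem hxP)) (descend_desc hc v l)).1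
      rwa [show x⁻¹ v = v by rw [Equiv.Perm.inv_eq_iff_eq, hxv]] at this
    simp only
    rw [descend_phiStr hc hdesc, (show ∀ (f : Equiv.Perm (Vertex q)) y, f (f⁻¹ y) = y from fun f => f.apply_symm_apply), phiStr_descend hc v l]

lemma buildPerm_apply (hP : IsScaleGroup P) (hc : IsPLabelling P c vp)
    {x : Equiv.Perm (Vertex q)} (hxP : x ∈ P) {v : Vertex q} (hxv : x v = v)
    (l : List (Fin q)) :
    buildPerm hP hc hxP hxv l = phiStr c v (x (descend hc v l)) := rfl

lemma buildPerm_phiStr (hP : IsScaleGroup P) (hc : IsPLabelling P c vp)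
    {x : Equiv.Perm (Vertex q)} (hxP : x ∈ P) {v : Vertex q} (hxv : x v = v)
    {w : Vertex q} (hw : Vertex.Descendant v w) :
    buildPerm hP hc hxP hxv (phiStr c v w) = phiStr c v (x w) := by
  rw [buildPerm_apply, descend_phiStr hc hw]

lemma buildPerm_mem (hP : IsScaleGroup P) (hc : IsPLabelling P c vp)
    {x : Equiv.Perm (Vertex q)} (hxP : x ∈ P) {v : Vertex q} (hxv : x v = v) :
    buildPerm hP hc hxP hxv ∈ sectSet P c v := by
  refine ⟨x, hxP, fun w hw => ?_⟩
  rw [buildPerm_phiStr hP hc hxP hxv hw, hxv]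

end Sect

section SectGroup

variable {q : ℕ} [NeZero q] {P : Subgroup (Equiv.Perm (Vertex q))}
  {c : Vertex q → Vertex q → Fin (q + 1)} {vp : ℤ → Vertex q}

/-- The section set as a subgroup. -/
noncomputable def sectGroup (hP : IsScaleGroup P) (hc : IsPLabelling P c vp) (v : Vertex q) :
    Subgroup (Equiv.Perm (List (Fin q))) where
  carrier := sectSet P c v
  one_mem' := ⟨1, P.one_mem, fun w _ => by simp⟩
  mul_mem' := by
    intro a b ha hb
    obtain ⟨x₂, hx₂P, hx₂⟩ := hb
    obtain ⟨x₁, hx₁P, hx₁⟩ := sect_mono hP hc v (x₂ v) ha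
    refine ⟨x₁ * x₂, P.mul_mem hx₁P hx₂P, fun w hw => ?_⟩
    rw [Equiv.Perm.mul_apply, hx₂ w hw, hx₁ (x₂ w) ((isom_desc (hP.1 hx₂P) hw).1),
      Equiv.Perm.mul_apply, Equiv.Perm.mul_apply]
  inv_mem' := by
    intro a ha
    obtain ⟨x, hxP, hx⟩ := ha
    have key : a⁻¹ ∈ sectSet P c (x v) := by
      refine ⟨x⁻¹, P.inv_mem hxP, fun w hw => ?_⟩
      have hw' : Vertex.Descendant v (x⁻¹ w) := by
        have := (isom_desc (hP.1 (P.inv_mem hxP)) hw).1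
        rwa [(show ∀ (f : Equiv.Perm (Vertex q)) y, f⁻¹ (f y) = y from fun f => f.symm_apply_apply)] at this
      have h1 := hx (x⁻¹ w) hw'
      rw [(show ∀ (f : Equiv.Perm (Vertex q)) y, f (f⁻¹ y) = y from fun f => f.apply_symm_apply)] at h1
      rw [← h1, (show ∀ (f : Equiv.Perm (Vertex q)) y, f⁻¹ (f y) = y from fun f => f.symm_apply_apply), (show ∀ (f : Equiv.Perm (List (Fin q))) y, f⁻¹ (f y) = y from fun f => f.symm_apply_apply)]
    exact sect_mono hP hc (x v) v key

lemma sectGroup_coe (hP : IsScaleGroup P) (hc : IsPLabelling P c vp) (v : Vertex q) :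
    (sectGroup hP hc v : Set (Equiv.Perm (List (Fin q)))) = sectSet P c v := rfl

lemma sectGroup_le_RIsom (hP : IsScaleGroup P) (hc : IsPLabelling P c vp) (v : Vertex q) :
    sectGroup hP hc v ≤ RIsom q := by
  intro g hg
  obtain ⟨x, hxP, hxv, hx⟩ := sect_norm hP hc (hg : g ∈ sectSet P c v)
  have hxo := hP.1 hxP
  have key : ∀ l : List (Fin q), g l = phiStr c v (x (descend hc v l)) := by
    intro l
    conv_lhs => rw [← phiStr_descend hc v l]
    exact hx _ (descend_desc hc v l)
  have hdesc : ∀ l : List (Fin q), Vertex.Descendant v (x (descend hc v l)) := by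
    intro l
    have := (isom_desc hxo (descend_desc hc v l)).1
    rwa [hxv] at this
  have hlev : ∀ l : List (Fin q), (x (descend hc v l)).level = v.level + l.length := by
    intro l
    have h2 := (isom_desc hxo (descend_desc hc v l)).2
    rw [hxv, descend_level hc v l] at h2
    omega
  constructor
  · intro l
    rw [key l, length_phiStr, hlev l]
    omega
  · intro l₁ l₂ hpre
    obtain ⟨t, rfl⟩ := hpre
    rw [key l₁, key (l₁ ++ t)]
    rw [descend_append hc v l₁ t]
    set u₁ := descend hc v l₁
    set u₂ := descend hc u₁ t
    have h1 : Vertex.Descendant u₁ u₂ := descend_desc hc u₁ t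
    have h2 : Vertex.Descendant (x u₁) (x u₂) := (isom_desc hxo h1).1
    rw [phiStr_append (hdesc l₁) h2]
    exact List.prefix_append _ _

end SectGroup

section SelfRep

variable {q : ℕ} [NeZero q] {P : Subgroup (Equiv.Perm (Vertex q))}
  {c : Vertex q → Vertex q → Fin (q + 1)} {vp : ℤ → Vertex q}

lemma sectGroup_selfRep (hP : IsScaleGroup P) (hc : IsPLabelling P c vp) (v : Vertex q) :
    SelfReplicating (sectGroup hP hc v) := by
  have hconj : ∀ (u : Vertex q) {x : Equiv.Perm (Vertex q)} (hxP : x ∈ P) (hxu : x u = u),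
      ∀ s : List (Fin q), buildPerm hP hc hxP hxu s = phiStr c u (x (descend hc u s)) :=
    fun u _ hxP hxu s => buildPerm_apply hP hc hxP hxu s
  refine ⟨?_, ?_, ?_⟩
  · -- self-similar
    intro w g hg hgw
    obtain ⟨x, hxP, hxv, hx⟩ := sect_norm hP hc (hg : g ∈ sectSet P c v)
    have hxo := hP.1 hxP
    set u := descend hc v w with hu_def
    have hu : phiStr c v u = w := phiStr_descend hc v w
    have hvu : Vertex.Descendant v u := descend_desc hc v w
    have hxu : x u = u := by
      have h2 : Vertex.Descendant v (x u) := by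
        have := (isom_desc hxo hvu).1; rwa [hxv] at this
      have h1 : phiStr c v (x u) = w := by rw [← hx u hvu, hu, hgw]
      have h3 := descend_phiStr hc h2
      rw [h1] at h3
      exact h3.symm
    refine ⟨buildPerm hP hc hxP hxu, sect_mono hP hc u v (buildPerm_mem hP hc hxP hxu), ?_⟩
    intro s
    have ht : descend hc v (w ++ s) = descend hc u s := descend_append hc v w s
    have h3 : Vertex.Descendant u (descend hc u s) := descend_desc hc u s
    have h4 : Vertex.Descendant u (x (descend hc u s)) := by
      have := (isom_desc hxo h3).1; rwa [hxu] at this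
    calc g (w ++ s) = g (phiStr c v (descend hc v (w ++ s))) := by
          rw [phiStr_descend hc v (w ++ s)]
      _ = phiStr c v (x (descend hc v (w ++ s))) := hx _ (descend_desc hc v (w ++ s))
      _ = phiStr c v (x (descend hc u s)) := by rw [ht]
      _ = phiStr c v u ++ phiStr c u (x (descend hc u s)) := phiStr_append hvu h4
      _ = w ++ buildPerm hP hc hxP hxu s := by rw [hu, hconj]
  · -- level-1 transitive
    intro j j'
    set u := cchild hc v j with hu_def
    set u' := cchild hc v j' with hu'_def
    obtain ⟨x, hxP, hxu, _⟩ := hc.2.2.2.2 u u'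
    have hxv : x v = v := by
      have h1 : x v = (x u).parent := by
        conv_lhs => rw [← cchild_parent hc v j]
        exact mem_isomOmega (hP.1 hxP) u
      rw [hxu, hu'_def, cchild_parent hc v j'] at h1
      exact h1
    refine ⟨buildPerm hP hc hxP hxv, buildPerm_mem hP hc hxP hxv, ?_⟩
    have hd : descend hc v [j] = u := rfl
    rw [hconj v hxP hxv [j], hd, hxu, hu'_def,
      phiStr_cons (cchild_parent hc v j') (desc_refl _), phiStr_self,
      cchild_label hc v j', toFinQ_castLE]
  · -- sections surjective
    intro w g' hg'
    set u := descend hc v w with hu_def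
    have hu : phiStr c v u = w := phiStr_descend hc v w
    have hvu : Vertex.Descendant v u := descend_desc hc v w
    have hg'u : g' ∈ sectSet P c u := sect_mono hP hc v u (hg' : g' ∈ sectSet P c v)
    obtain ⟨x, hxP, hxu, hx⟩ := sect_norm hP hc hg'u
    have hxo := hP.1 hxP
    have hxv : x v = v := by
      have h1 : paIter (u.level - v.level).toNat u = v := paIter_depth hvu
      rw [← h1, isom_paIter hxo, hxu]
    refine ⟨buildPerm hP hc hxP hxv, buildPerm_mem hP hc hxP hxv, ?_, ?_⟩
    · rw [hconj v hxP hxv w, ← hu_def, hxu, hu]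
    · intro s
      have ht : descend hc v (w ++ s) = descend hc u s := descend_append hc v w s
      have h3 : Vertex.Descendant u (descend hc u s) := descend_desc hc u s
      have h4 : Vertex.Descendant u (x (descend hc u s)) := by
        have := (isom_desc hxo h3).1; rwa [hxu] at this
      have hg's : g' s = phiStr c u (x (descend hc u s)) := by
        conv_lhs => rw [← phiStr_descend hc u s]
        exact hx _ h3
      calc buildPerm hP hc hxP hxv (w ++ s)
          = phiStr c v (x (descend hc v (w ++ s))) := hconj v hxP hxv (w ++ s)
        _ = phiStr c v (x (descend hc u s)) := by rw [ht]
        _ = phiStr c v u ++ phiStr c u (x (descend hc u s)) := phiStr_append hvu h4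
        _ = w ++ g' s := by rw [hu, hg's]

end SelfRep

section Topology

open Topology in
/-- Basic neighbourhoods in the permutation topology. -/
lemma nhds_perm_basic {X : Type*} (g : Equiv.Perm X) {S : Set X} (hS : S.Finite) :
    {h : Equiv.Perm X | ∀ a ∈ S, h a = g a} ∈ @nhds _ (permTop X) g := by
  letI tF : TopologicalSpace (X → X) := funTop X
  letI tPr : TopologicalSpace ((X → X) × (X → X)) := instTopologicalSpaceProd
  have hnhds : @nhds _ (permTop X) g
      = Filter.comap (fun p : Equiv.Perm X => ((p : X → X), ((p⁻¹ : Equiv.Perm X) : X → X)))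
        (@nhds _ tPr (⇑g, ⇑g⁻¹)) := nhds_induced _ _
  rw [hnhds, Filter.mem_comap]
  refine ⟨{f : X → X | ∀ a ∈ S, f a = g a} ×ˢ (Set.univ : Set (X → X)), ?_, ?_⟩
  · have hopen : IsOpen {f : X → X | ∀ a ∈ S, f a = g a} := by
      have hEq : {f : X → X | ∀ a ∈ S, f a = g a} = Set.pi S (fun a => {g a}) := by
        ext f; simp [Set.mem_pi]
      rw [hEq]
      exact @isOpen_set_pi X (fun _ => X) (fun _ => ⊥) S (fun a => {g a}) hS
        (fun a _ => @isOpen_discrete X ⊥ (@DiscreteTopology.mk X ⊥ rfl) {g a})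
    have hopen2 : IsOpen (({f : X → X | ∀ a ∈ S, f a = g a}) ×ˢ (Set.univ : Set (X → X))) :=
      @IsOpen.prod _ _ tF tF _ _ hopen (@isOpen_univ _ tF)
    exact hopen2.mem_nhds (Set.mem_prod.2 ⟨fun a _ => rfl, Set.mem_univ _⟩)
  · intro h hh
    exact fun a ha => hh.1 a ha

open Topology in
/-- Pointwise convergence (of the maps and their inverses) implies convergence in the
permutation topology. -/
lemma tendsto_permTop {X ι : Type*} {l : Filter ι} {f : ι → Equiv.Perm X} {g : Equiv.Perm X}
    (h1 : ∀ a, ∀ᶠ n in l, f n a = g a) (h2 : ∀ a, ∀ᶠ n in l, (f n)⁻¹ a = g⁻¹ a) :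
    Filter.Tendsto f l (@nhds _ (permTop X) g) := by
  letI tF : TopologicalSpace (X → X) := funTop X
  letI tPr : TopologicalSpace ((X → X) × (X → X)) := instTopologicalSpaceProd
  have hnhds : @nhds _ (permTop X) g
      = Filter.comap (fun p : Equiv.Perm X => ((p : X → X), ((p⁻¹ : Equiv.Perm X) : X → X)))
        (@nhds _ tPr (⇑g, ⇑g⁻¹)) := nhds_induced _ _
  have hprod : @nhds _ tPr (⇑g, ⇑g⁻¹) = (@nhds _ tF ⇑g) ×ˢ (@nhds _ tF ⇑g⁻¹) :=
    @nhds_prod_eq _ _ tF tF ⇑g ⇑g⁻¹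
  rw [hnhds, Filter.tendsto_comap_iff, hprod]
  have key : ∀ (F : ι → X → X) (G : X → X), (∀ a, ∀ᶠ n in l, F n a = G a) →
      Filter.Tendsto F l (@nhds _ tF G) := by
    intro F G hFG
    have hpi : @nhds (X → X) tF G = Filter.pi (fun a => @nhds X ⊥ (G a)) :=
      @nhds_pi X (fun _ => X) (fun _ => ⊥) G
    rw [hpi, Filter.tendsto_pi]
    intro a
    have hd : @nhds X ⊥ (G a) = pure (G a) :=
      congrFun (@nhds_discrete X ⊥ (@DiscreteTopology.mk X ⊥ rfl)) (G a)
    rw [hd, Filter.tendsto_pure]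
    exact hFG a
  exact Filter.Tendsto.prodMk (key _ _ h1) (key _ _ h2)

/-- Descendants of a fixed vertex at a fixed level form a finite set. -/
lemma finite_fiber {q : ℕ} [NeZero q] (a : Vertex q) (L : ℤ) :
    {w : Vertex q | Vertex.Descendant a w ∧ w.level = L}.Finite := by
  haveI := (Set.finite_Icc (a.level + 1) L).to_subtype
  set F : Vertex q → (↥(Set.Icc (a.level + 1) L) → Fin q) := fun w i => w.lab i
  have hinj : Set.InjOn F {w : Vertex q | Vertex.Descendant a w ∧ w.level = L} := by
    rintro w₁ ⟨hw₁, hl₁⟩ w₂ ⟨hw₂, hl₂⟩ hF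
    refine Vertex.ext (by rw [hl₁, hl₂]) ?_
    funext i
    by_cases hgt : L < i
    · rw [lab_eq_zero (by omega : w₁.level < i), lab_eq_zero (by omega : w₂.level < i)]
    by_cases hle : i ≤ a.level
    · have e1 : w₁.lab i = a.lab i := by
        have := congrArg (fun u => Vertex.lab u i) hw₁.2
        simpa [Vertex.trunc, not_lt.2 hle] using this
      have e2 : w₂.lab i = a.lab i := by
        have := congrArg (fun u => Vertex.lab u i) hw₂.2
        simpa [Vertex.trunc, not_lt.2 hle] using this
      rw [e1, e2]
    · exact congrFun hF ⟨i, by constructor <;> omega⟩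
  exact Set.Finite.of_finite_image (Set.toFinite _) hinj

/-- Along an ultrafilter, a finite-range function is eventually constant. -/
lemma ultra_const {α : Type*} (U : Ultrafilter ℕ) {f : ℕ → α} (h : (Set.range f).Finite) :
    ∃ a, ∀ᶠ n in (U : Filter ℕ), f n = a := by
  have hmem : Set.range f ∈ U.map f := by
    rw [Ultrafilter.mem_map]
    have hpre : f ⁻¹' Set.range f = Set.univ := by
      ext n; simp [Set.mem_range]
    rw [hpre]
    exact Filter.univ_mem
  obtain ⟨a, _, hpure⟩ := Ultrafilter.eq_pure_of_finite_mem h hmem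
  refine ⟨a, ?_⟩
  have h2 : {y : α | y = a} ∈ U.map f := by
    rw [hpure]
    exact rfl
  rw [Ultrafilter.mem_map] at h2
  exact h2

end Topology

section Closed

variable {q : ℕ} [NeZero q] {P : Subgroup (Equiv.Perm (Vertex q))}
  {c : Vertex q → Vertex q → Fin (q + 1)} {vp : ℤ → Vertex q}

lemma sectSet_closed (hP : IsScaleGroup P) (hc : IsPLabelling P c vp) (v : Vertex q) :
    IsClosed (sectSet P c v) := by
  apply isClosed_of_closure_subset
  intro g hg
  -- approximating witnesses
  have H : ∀ n : ℕ, ∃ x : Equiv.Perm (Vertex q), x ∈ P ∧ x v = v ∧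
      ∀ w, Vertex.Descendant v w → w.level ≤ v.level + n →
        g (phiStr c v w) = phiStr c v (x w) := by
    intro n
    have hnb := nhds_perm_basic g (List.finite_length_le (Fin q) n)
    obtain ⟨g', hg't, hg'mem⟩ := mem_closure_iff_nhds.1 hg _ hnb
    obtain ⟨x, hxP, hxv, hx⟩ := sect_norm hP hc hg'mem
    refine ⟨x, hxP, hxv, fun w hw hwl => ?_⟩
    have hlen : (phiStr c v w).length ≤ n := by
      rw [length_phiStr]; omega
    rw [← hg't _ hlen]
    exact hx w hw
  choose x hxP hxv hx using H
  set U : Ultrafilter ℕ := @Filter.hyperfilter ℕ _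
  haveI hNB : (U : Filter ℕ).NeBot := U.neBot
  -- finite ranges
  have hfin : ∀ (y : ℕ → Equiv.Perm (Vertex q)), (∀ n, y n ∈ P) → (∀ n, (y n) v = v) →
      ∀ w : Vertex q, (Set.range fun n => y n w).Finite := by
    intro y hyP hyv w
    obtain ⟨Nw, hNw⟩ := w.bdd
    obtain ⟨Nv, hNv⟩ := v.bdd
    set m := min (min Nw Nv) (min w.level v.level) - 1 with hm
    have htr : w.trunc m = v.trunc m := by
      refine Vertex.ext rfl ?_
      funext i
      show (if m < i then 0 else w.lab i) = (if m < i then 0 else v.lab i)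
      by_cases h : m < i
      · simp [h]
      · have h1 : w.lab i = 0 := Fin.ext (by simpa using hNw i (by omega))
        have h2 : v.lab i = 0 := Fin.ext (by simpa using hNv i (by omega))
        simp [h, h1, h2]
    set a := v.trunc m with ha
    have hav : Vertex.Descendant a v := ⟨by simp [ha, trunc_level]; omega, rfl⟩
    have haw : Vertex.Descendant a w := ⟨by simp [ha, trunc_level]; omega, htr⟩
    have hya : ∀ n, y n a = a := by
      intro n
      have h1 : paIter (v.level - m).toNat v = a := by
        rw [paIter_eq_trunc, ha]
        congr 1
        omega
      rw [← h1, isom_paIter (hP.1 (hyP n)), hyv n]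
    have hsub : (Set.range fun n => y n w)
        ⊆ {w' : Vertex q | Vertex.Descendant a w' ∧ w'.level = w.level} := by
      rintro _ ⟨n, rfl⟩
      have h1 := isom_desc (hP.1 (hyP n)) haw
      rw [hya n] at h1
      refine ⟨h1.1, ?_⟩
      show ((y n) w).level = w.level
      have h2 := h1.2
      omega
    exact (finite_fiber a w.level).subset hsub
  have hX : ∀ w : Vertex q, ∃ w', ∀ᶠ n in (U : Filter ℕ), x n w = w' :=
    fun w => ultra_const U (hfin x hxP hxv w)
  have hY : ∀ w : Vertex q, ∃ w', ∀ᶠ n in (U : Filter ℕ), (x n)⁻¹ w = w' :=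
    fun w => ultra_const U (hfin (fun n => (x n)⁻¹) (fun n => P.inv_mem (hxP n))
      (fun n => by rw [Equiv.Perm.inv_eq_iff_eq, hxv n]) w)
  choose X hXs using hX
  choose Y hYs using hY
  have hleft : Function.LeftInverse Y X := by
    intro w
    obtain ⟨n, h1, h2⟩ := ((hXs w).and (hYs (X w))).exists
    rw [← h2, ← h1, (show ∀ (f : Equiv.Perm (Vertex q)) y, f⁻¹ (f y) = y from fun f => f.symm_apply_apply)]
  have hright : Function.RightInverse Y X := by
    intro w
    obtain ⟨n, h1, h2⟩ := ((hYs w).and (hXs (Y w))).exists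
    rw [← h2, ← h1, (show ∀ (f : Equiv.Perm (Vertex q)) y, f (f⁻¹ y) = y from fun f => f.apply_symm_apply)]
  set xl : Equiv.Perm (Vertex q) := ⟨X, Y, hleft, hright⟩ with hxl
  have hXc : ∀ w, xl w = X w := fun _ => rfl
  have hYc : ∀ w, xl⁻¹ w = Y w := fun _ => rfl
  have htd : Filter.Tendsto x (U : Filter ℕ) (nhds xl) :=
    tendsto_permTop (fun a => by rw [hXc]; exact hXs a) (fun a => by rw [hYc]; exact hYs a)
  have hxlP : xl ∈ P := hP.2.1.mem_of_tendsto htd (Filter.Eventually.of_forall hxP)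
  have hxlv : xl v = v := by
    obtain ⟨n, h1⟩ := (hXs v).exists
    rw [hXc, ← h1, hxv n]
  refine ⟨xl, hxlP, fun w hw => ?_⟩
  have hcof : ∀ᶠ n in (U : Filter ℕ), w.level ≤ v.level + (n : ℕ) := by
    apply Filter.hyperfilter_le_cofinite
    have hss : {n : ℕ | ¬ w.level ≤ v.level + (n : ℕ)} ⊆ Set.Iic (w.level - v.level).toNat := by
      intro n hn
      simp only [Set.mem_setOf_eq, not_le] at hn
      simp only [Set.mem_Iic]
      omega
    exact ((Set.finite_Iic _).subset hss)
  obtain ⟨n, h1, h2⟩ := ((hXs w).and hcof).exists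
  rw [hx n w hw h2, hxlv, hXc, h1]

end Closed

end Scale

open Scale in
/-- For a scale group `P` with a `P`-labelling `c`, the section sets
`P|_v` coincide for all vertices `v` and form a closed self-replicating subgroup of
`Isom(T_{q,q})`. -/
theorem statement_10 (q : ℕ) [NeZero q] (hq : 2 ≤ q)
    (P : Subgroup (Equiv.Perm (Vertex q))) (hP : IsScaleGroup P)
    (c : Vertex q → Vertex q → Fin (q + 1)) (vp : ℤ → Vertex q)
    (hc : IsPLabelling P c vp) :
    (∀ v v' : Vertex q, sectSet P c v = sectSet P c v') ∧
    (∀ v : Vertex q, ∃ G : Subgroup (Equiv.Perm (List (Fin q))),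
      (G : Set (Equiv.Perm (List (Fin q)))) = sectSet P c v ∧
      G ≤ RIsom q ∧
      IsClosed (G : Set (Equiv.Perm (List (Fin q)))) ∧
      SelfReplicating G) := by
  refine ⟨fun v v' => sect_eq hP hc v v', fun v => ⟨sectGroup hP hc v, rfl,
    sectGroup_le_RIsom hP hc v, ?_, sectGroup_selfRep hP hc v⟩⟩
  rw [sectGroup_coe]
  exact sectSet_closed hP hc v
end

section
/- Let G be a group, y ∈ G, and let V, W be subgroups of G such that yWy⁻¹ is a proper subgroup of W and there exist m, n ∈ ℤ with yᵐVy⁻ᵐ ≤ W and W ≤ yⁿVy⁻ⁿ. Then there exists l ∈ ℤ such that yVy⁻¹ ≤ y^l W y^{−l} and V is not contained in y^l W y^{−l}. -/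
namespace Scale

variable {G : Type*} [Group G]

lemma conjSub_conjSub (a b : G) (V : Subgroup G) :
    conjSub a (conjSub b V) = conjSub (a * b) V := by
  ext x
  simp only [conjSub, Subgroup.mem_map, MulEquiv.coe_toMonoidHom, MulAut.conj_apply]
  constructor
  · rintro ⟨_, ⟨v, hv, rfl⟩, rfl⟩
    exact ⟨v, hv, by group⟩
  · rintro ⟨v, hv, rfl⟩
    exact ⟨b * v * b⁻¹, ⟨v, hv, rfl⟩, by group⟩

lemma conjSub_one' (V : Subgroup G) : conjSub (1 : G) V = V := by
  ext x
  simp [conjSub]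

lemma conjSub_mono (a : G) {V W : Subgroup G} (h : V ≤ W) : conjSub a V ≤ conjSub a W :=
  Subgroup.map_mono h

lemma conjSub_pow_le (y : G) (W : Subgroup G) (hW : conjSub y W ≤ W) :
    ∀ k : ℕ, conjSub (y ^ k) W ≤ W := by
  intro k
  induction k with
  | zero => simp [conjSub_one']
  | succ k ih =>
      have h1 : conjSub (y ^ (k + 1)) W = conjSub (y ^ k) (conjSub y W) := by
        rw [conjSub_conjSub, ← pow_succ]
      rw [h1]
      exact le_trans (conjSub_mono _ hW) ih

lemma conjSub_zpow_lt (y : G) (W : Subgroup G) (hW : conjSub y W < W) :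
    ∀ k : ℤ, 1 ≤ k → conjSub (y ^ k) W < W := by
  intro k hk
  have h1 : conjSub (y ^ k) W = conjSub y (conjSub (y ^ ((k - 1).toNat : ℕ)) W) := by
    rw [conjSub_conjSub]
    congr 1
    have hk' : (((k - 1).toNat : ℕ) : ℤ) = k - 1 := by omega
    rw [← zpow_natCast, hk', ← zpow_one_add]
    congr 1
    omega
  calc conjSub (y ^ k) W ≤ conjSub y W :=
        h1 ▸ conjSub_mono y (conjSub_pow_le y W hW.le _)
    _ < W := hW

end Scale

open Scale in
/-- If `yWy⁻¹ < W` and `V`, `W` are commensurate along conjugation by `y`,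
then some conjugate `yˡWy⁻ˡ` contains `yVy⁻¹` but not `V`. -/
theorem statement_15 {G : Type*} [Group G] (y : G) (V W : Subgroup G)
    (hW : conjSub y W < W)
    (hm : ∃ m : ℤ, conjSub (y ^ m) V ≤ W)
    (hn : ∃ n : ℤ, W ≤ conjSub (y ^ n) V) :
    ∃ l : ℤ, conjSub y V ≤ conjSub (y ^ l) W ∧ ¬ V ≤ conjSub (y ^ l) W := by
  obtain ⟨m, hm⟩ := hm
  obtain ⟨n, hn⟩ := hn
  set S : ℤ → Prop := fun l => conjSub y V ≤ conjSub (y ^ l) W with hS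
  have hmem : S (1 - m) := by
    have h1 : conjSub y V = conjSub (y ^ (1 - m)) (conjSub (y ^ m) V) := by
      rw [conjSub_conjSub, ← zpow_add]
      norm_num
    rw [hS]
    simp only
    rw [h1]
    exact conjSub_mono _ hm
  have hbdd : ∀ l : ℤ, S l → l ≤ 1 - n := by
    intro l hl
    by_contra hc
    push_neg at hc
    -- from S l : V ≤ conjSub (y ^ (l - 1)) W
    have h2 : V ≤ conjSub (y ^ (l - 1)) W := by
      have h3 := conjSub_mono y⁻¹ hl
      rw [conjSub_conjSub, conjSub_conjSub, inv_mul_cancel, conjSub_one'] at h3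
      have h4 : y⁻¹ * y ^ l = y ^ (l - 1) := by
        rw [← zpow_neg_one, ← zpow_add]
        congr 1
        omega
      rwa [h4] at h3
    have h5 : W ≤ conjSub (y ^ (n + l - 1)) W := by
      refine le_trans hn ?_
      have := conjSub_mono (y ^ n) h2
      rwa [conjSub_conjSub, ← zpow_add, show n + (l - 1) = n + l - 1 by ring] at this
    have h6 : conjSub (y ^ (n + l - 1)) W < W :=
      conjSub_zpow_lt y W hW (n + l - 1) (by omega)
    exact absurd (le_antisymm h6.le h5) h6.ne
  obtain ⟨L, hL, hLmax⟩ := Int.exists_greatest_of_bdd ⟨1 - n, hbdd⟩ ⟨1 - m, hmem⟩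
  refine ⟨L, hL, ?_⟩
  intro hcon
  have h7 : conjSub y V ≤ conjSub (y ^ (L + 1)) W := by
    have := conjSub_mono y hcon
    rwa [conjSub_conjSub, show y * y ^ L = y ^ (L + 1) by
      rw [← zpow_one_add]; congr 1; omega] at this
  have := hLmax (L + 1) h7
  omega
end
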